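/- arXiv:1503.04035 — 3 statements merged into one kernel-verified Lean document; each statement's English description precedes it below -/
import Mathlib

section
/- Let r, s be positive integers with s ≥ r, let M₀, M₁ be complex r×s matrices satisfying M₀†M₀ + M₁†M₁ = I_s and M₀M₀† + M₁M₁† ≥ I_r (in the positive semidefinite order), and let p₀, p₁ > 0 be real numbers. Then the r×r matrix X = p₀M₀M₀† + p₁M₁M₁† is positive definite (hence invertible), and the s×s matrix R = p₀ M₀† X^{−1} M₀ + p₁ M₁† X^{−1} M₁ has operator norm ‖R‖ ≤ 1. -/
open scoped BigOperators ComplexOrder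
open Matrix

noncomputable section

/-- The ℓ²-operator norm of a matrix (largest singular value). -/
def opNorm {I : Type} [Fintype I] [DecidableEq I] (M : Matrix I I ℂ) : ℝ :=
  ‖Matrix.toEuclideanCLM (𝕜 := ℂ) M‖

namespace MatrixRAux

/-- Inclusion of plain vectors into Euclidean space. -/
abbrev toE {n : ℕ} (u : Fin n → ℂ) : EuclideanSpace ℂ (Fin n) := (WithLp.equiv 2 _).symm u

lemma inner_toE {n : ℕ} (u v : Fin n → ℂ) : (inner ℂ (toE u) (toE v) : ℂ) = star u ⬝ᵥ v := by
  simp [PiLp.inner_apply, dotProduct, mul_comm]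

lemma toE_add {n : ℕ} (u v : Fin n → ℂ) : toE (u + v) = toE u + toE v := rfl

lemma toE_smul {n : ℕ} (c : ℂ) (u : Fin n → ℂ) : toE (c • u) = c • toE u := rfl

lemma inner_self_ofReal {n : ℕ} (x : EuclideanSpace ℂ (Fin n)) :
    (inner ℂ x x : ℂ) = ((‖x‖ ^ 2 : ℝ) : ℂ) := by
  rw [inner_self_eq_norm_sq_to_K]; norm_cast

lemma inner_mulVec_left {m n : ℕ} (M : Matrix (Fin m) (Fin n) ℂ) (z : Fin n → ℂ)
    (x : Fin m → ℂ) :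
    (inner ℂ (toE (M *ᵥ z)) (toE x) : ℂ) = inner ℂ (toE z) (toE (Mᴴ *ᵥ x)) := by
  rw [inner_toE, inner_toE, star_mulVec, dotProduct_mulVec]

lemma inner_mulVec_right {m n : ℕ} (M : Matrix (Fin m) (Fin n) ℂ) (x : Fin m → ℂ)
    (z : Fin n → ℂ) :
    (inner ℂ (toE x) (toE (M *ᵥ z)) : ℂ) = inner ℂ (toE (Mᴴ *ᵥ x)) (toE z) := by
  calc (inner ℂ (toE x) (toE (M *ᵥ z)) : ℂ)
      = starRingEnd ℂ (inner ℂ (toE (M *ᵥ z)) (toE x)) := (inner_conj_symm _ _).symm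
    _ = starRingEnd ℂ (inner ℂ (toE z) (toE (Mᴴ *ᵥ x))) := by rw [inner_mulVec_left]
    _ = inner ℂ (toE (Mᴴ *ᵥ x)) (toE z) := inner_conj_symm _ _

/-- Quadratic form of `Mᴴ * M`. -/
lemma quad_conjTranspose_mul {m n : ℕ} (M : Matrix (Fin m) (Fin n) ℂ) (u : Fin n → ℂ) :
    star u ⬝ᵥ ((Mᴴ * M) *ᵥ u) = ((‖toE (M *ᵥ u)‖ ^ 2 : ℝ) : ℂ) := by
  rw [← Matrix.mulVec_mulVec, ← inner_toE, inner_mulVec_right, conjTranspose_conjTranspose,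
    inner_self_ofReal]

/-- Quadratic form of `M * Mᴴ`. -/
lemma quad_mul_conjTranspose {m n : ℕ} (M : Matrix (Fin m) (Fin n) ℂ) (x : Fin m → ℂ) :
    star x ⬝ᵥ ((M * Mᴴ) *ᵥ x) = ((‖toE (Mᴴ *ᵥ x)‖ ^ 2 : ℝ) : ℂ) := by
  rw [← Matrix.mulVec_mulVec, ← inner_toE, inner_mulVec_right, inner_self_ofReal]

lemma re_ofReal_mul' (a : ℝ) (z : ℂ) : RCLike.re ((a : ℂ) * z) = a * RCLike.re z := by
  simp [Complex.mul_re]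

lemma norm_ofReal' (a : ℝ) : ‖(a : ℂ)‖ = |a| := by simp

lemma real_cs_aux {a b c d t : ℝ} (ha : 0 ≤ a) (hb : 0 ≤ b) (hc : 0 ≤ c) (hd : 0 ≤ d)
    (ht : 0 ≤ t) (H1 : t ^ 2 ≤ a * c + b * d) (H2 : a ^ 2 + b ^ 2 = t ^ 2) :
    t ^ 2 ≤ c ^ 2 + d ^ 2 := by
  nlinarith [sq_nonneg (a * d - b * c), sq_nonneg (a * c + b * d), sq_nonneg c, sq_nonneg d,
    mul_nonneg (mul_nonneg ha hc) (mul_nonneg hb hd), sq_nonneg (t * c), sq_nonneg (t * d),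
    sq_nonneg (a * c + b * d - t ^ 2)]

lemma final_aux {q nv nw : ℝ} (h1 : nw ^ 2 ≤ q) (h2 : q ≤ nv * nw) (hnv : 0 ≤ nv)
    (hnw : 0 ≤ nw) : q ≤ nv ^ 2 := by
  nlinarith [sq_nonneg (nv - nw)]

end MatrixRAux

open MatrixRAux

/-- Key matrix inequality: if `M₀†M₀ + M₁†M₁ = I_s` and `M₀M₀† + M₁M₁† ≥ I_r` with `s ≥ r`,
then `X = p₀M₀M₀† + p₁M₁M₁†` is positive definite and
`R = p₀M₀†X⁻¹M₀ + p₁M₁†X⁻¹M₁` has operator norm at most `1`. -/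
theorem matrix_R_norm_bound (r s : ℕ) (hr : 0 < r) (hs : r ≤ s)
    (M₀ M₁ : Matrix (Fin r) (Fin s) ℂ)
    (h1 : M₀ᴴ * M₀ + M₁ᴴ * M₁ = 1)
    (h2 : (M₀ * M₀ᴴ + M₁ * M₁ᴴ - 1).PosSemidef)
    (p₀ p₁ : ℝ) (hp₀ : 0 < p₀) (hp₁ : 0 < p₁)
    (Xm : Matrix (Fin r) (Fin r) ℂ)
    (hX : Xm = (p₀ : ℂ) • (M₀ * M₀ᴴ) + (p₁ : ℂ) • (M₁ * M₁ᴴ)) :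
    Xm.PosDef ∧ IsUnit Xm ∧
      opNorm ((p₀ : ℂ) • (M₀ᴴ * Xm⁻¹ * M₀) + (p₁ : ℂ) • (M₁ᴴ * Xm⁻¹ * M₁)) ≤ 1 := by
  subst hX
  set X : Matrix (Fin r) (Fin r) ℂ := (p₀ : ℂ) • (M₀ * M₀ᴴ) + (p₁ : ℂ) • (M₁ * M₁ᴴ) with hXdef
  -- quadratic form of X
  have quadX : ∀ x : Fin r → ℂ, star x ⬝ᵥ (X *ᵥ x) =
      ((p₀ * ‖toE (M₀ᴴ *ᵥ x)‖ ^ 2 + p₁ * ‖toE (M₁ᴴ *ᵥ x)‖ ^ 2 : ℝ) : ℂ) := by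
    intro x
    rw [hXdef, add_mulVec, smul_mulVec, smul_mulVec, dotProduct_add,
      dotProduct_smul, dotProduct_smul, quad_mul_conjTranspose, quad_mul_conjTranspose]
    push_cast [smul_eq_mul]
    ring
  -- h1 as a norm identity
  have key1 : ∀ u : Fin s → ℂ,
      ‖toE (M₀ *ᵥ u)‖ ^ 2 + ‖toE (M₁ *ᵥ u)‖ ^ 2 = ‖toE u‖ ^ 2 := by
    intro u
    have h := congrArg (fun A : Matrix (Fin s) (Fin s) ℂ => star u ⬝ᵥ (A *ᵥ u)) h1
    simp only [add_mulVec, dotProduct_add, one_mulVec] at h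
    rw [quad_conjTranspose_mul, quad_conjTranspose_mul, ← inner_toE,
      inner_self_ofReal] at h
    exact_mod_cast h
  -- h2 as a norm inequality
  have key2 : ∀ x : Fin r → ℂ,
      ‖toE x‖ ^ 2 ≤ ‖toE (M₀ᴴ *ᵥ x)‖ ^ 2 + ‖toE (M₁ᴴ *ᵥ x)‖ ^ 2 := by
    intro x
    have h := (posSemidef_iff_dotProduct_mulVec.mp h2).2 x
    rw [sub_mulVec, add_mulVec, one_mulVec, dotProduct_sub, dotProduct_add,
      quad_mul_conjTranspose, quad_mul_conjTranspose, ← inner_toE,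
      inner_self_ofReal] at h
    have h' : (0 : ℂ) ≤ ((‖toE (M₀ᴴ *ᵥ x)‖ ^ 2 + ‖toE (M₁ᴴ *ᵥ x)‖ ^ 2 - ‖toE x‖ ^ 2 : ℝ) : ℂ) := by
      exact_mod_cast h
    rw [Complex.zero_le_real] at h'
    linarith
  -- contraction property
  have key3 : ∀ x y : Fin r → ℂ,
      ‖toE (M₀ᴴ *ᵥ x + M₁ᴴ *ᵥ y)‖ ^ 2 ≤ ‖toE x‖ ^ 2 + ‖toE y‖ ^ 2 := by
    intro x y
    set z : Fin s → ℂ := M₀ᴴ *ᵥ x + M₁ᴴ *ᵥ y with hz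
    have hzz : ‖toE z‖ ^ 2 = RCLike.re (inner ℂ (toE z) (toE z) : ℂ) :=
      (inner_self_eq_norm_sq _).symm
    have hsplit : (inner ℂ (toE z) (toE z) : ℂ) =
        inner ℂ (toE (M₀ *ᵥ z)) (toE x) + inner ℂ (toE (M₁ *ᵥ z)) (toE y) := by
      calc (inner ℂ (toE z) (toE z) : ℂ)
          = inner ℂ (toE z) (toE (M₀ᴴ *ᵥ x)) + inner ℂ (toE z) (toE (M₁ᴴ *ᵥ y)) := by
            rw [show toE z = toE (M₀ᴴ *ᵥ x) + toE (M₁ᴴ *ᵥ y) from rfl, inner_add_right]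
        _ = inner ℂ (toE (M₀ *ᵥ z)) (toE x) + inner ℂ (toE (M₁ *ᵥ z)) (toE y) := by
            rw [inner_mulVec_left, inner_mulVec_left]
    have hre : ‖toE z‖ ^ 2 ≤ ‖toE (M₀ *ᵥ z)‖ * ‖toE x‖ + ‖toE (M₁ *ᵥ z)‖ * ‖toE y‖ := by
      rw [hzz, hsplit, map_add]
      exact add_le_add (re_inner_le_norm _ _) (re_inner_le_norm _ _)
    exact real_cs_aux (norm_nonneg _) (norm_nonneg _) (norm_nonneg _) (norm_nonneg _)
      (norm_nonneg _) hre (key1 z)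
  -- X is positive definite
  have hXH : X.IsHermitian := by
    rw [Matrix.IsHermitian, hXdef]
    simp [conjTranspose_smul, conjTranspose_add, conjTranspose_mul,
      conjTranspose_conjTranspose, Complex.star_def, Complex.conj_ofReal]
  have hXpd : X.PosDef := by
    refine posDef_iff_dotProduct_mulVec.mpr ⟨hXH, fun x hx => ?_⟩
    rw [quadX, Complex.zero_lt_real]
    have hxe : toE x ≠ 0 := fun h => hx (congrArg WithLp.ofLp h)
    have hxn : 0 < ‖toE x‖ ^ 2 := pow_pos (norm_pos_iff.mpr hxe) 2
    have hk := key2 x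
    have h0 : 0 ≤ ‖toE (M₀ᴴ *ᵥ x)‖ ^ 2 := sq_nonneg _
    have h1' : 0 ≤ ‖toE (M₁ᴴ *ᵥ x)‖ ^ 2 := sq_nonneg _
    rcases lt_or_ge 0 (‖toE (M₀ᴴ *ᵥ x)‖ ^ 2) with hpos | hle
    · nlinarith [mul_pos hp₀ hpos, mul_nonneg hp₁.le h1']
    · have hpos1 : 0 < ‖toE (M₁ᴴ *ᵥ x)‖ ^ 2 := by nlinarith
      nlinarith [mul_pos hp₁ hpos1, mul_nonneg hp₀.le h0]
  have hXunit : IsUnit X := hXpd.isUnit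
  have hXdet : IsUnit X.det := (Matrix.isUnit_iff_isUnit_det X).mp hXunit
  have hXinv : X * X⁻¹ = 1 := Matrix.mul_nonsing_inv X hXdet
  have hXinvH : X⁻¹ᴴ = X⁻¹ := by
    rw [Matrix.conjTranspose_nonsing_inv, hXH.eq]
  -- the matrix R
  set R : Matrix (Fin s) (Fin s) ℂ :=
    (p₀ : ℂ) • (M₀ᴴ * X⁻¹ * M₀) + (p₁ : ℂ) • (M₁ᴴ * X⁻¹ * M₁) with hRdef
  refine ⟨hXpd, hXunit, ?_⟩
  -- the star inequality
  have quadX' : ∀ c : Fin r → ℂ, RCLike.re (inner ℂ (toE c) (toE (X *ᵥ c)) : ℂ) =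
      p₀ * ‖toE (M₀ᴴ *ᵥ c)‖ ^ 2 + p₁ * ‖toE (M₁ᴴ *ᵥ c)‖ ^ 2 := by
    intro c
    rw [inner_toE, quadX]
    simp [← Complex.ofReal_pow]
  have star_ineq : ∀ c₀ c₁ : Fin r → ℂ,
      ‖toE ((p₀ : ℂ) • (M₀ᴴ *ᵥ c₀) + (p₁ : ℂ) • (M₁ᴴ *ᵥ c₁))‖ ^ 2 ≤
        p₀ * RCLike.re (inner ℂ (toE c₀) (toE (X *ᵥ c₀)) : ℂ) +
        p₁ * RCLike.re (inner ℂ (toE c₁) (toE (X *ᵥ c₁)) : ℂ) := by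
    intro c₀ c₁
    rw [quadX', quadX']
    set g₀ := toE (M₀ᴴ *ᵥ c₀)
    set g₁ := toE (M₁ᴴ *ᵥ c₁)
    set h₀ := toE (M₁ᴴ *ᵥ c₀)
    set h₁ := toE (M₀ᴴ *ᵥ c₁)
    have cross : 2 * RCLike.re (inner ℂ g₀ g₁ : ℂ) ≤ ‖h₀‖ ^ 2 + ‖h₁‖ ^ 2 := by
      have e1 : ‖g₀ + g₁‖ ^ 2 = ‖g₀‖ ^ 2 + 2 * RCLike.re (inner ℂ g₀ g₁ : ℂ) + ‖g₁‖ ^ 2 :=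
        norm_add_sq g₀ g₁
      have e2 : ‖g₀ + g₁‖ ^ 2 ≤ ‖toE c₀‖ ^ 2 + ‖toE c₁‖ ^ 2 := by
        have : g₀ + g₁ = toE (M₀ᴴ *ᵥ c₀ + M₁ᴴ *ᵥ c₁) := rfl
        rw [this]
        exact key3 c₀ c₁
      have e3 := key2 c₀
      have e4 := key2 c₁
      linarith
    have expand : ‖toE ((p₀ : ℂ) • (M₀ᴴ *ᵥ c₀) + (p₁ : ℂ) • (M₁ᴴ *ᵥ c₁))‖ ^ 2 =
        p₀ ^ 2 * ‖g₀‖ ^ 2 + 2 * (p₀ * p₁) * RCLike.re (inner ℂ g₀ g₁ : ℂ) +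
          p₁ ^ 2 * ‖g₁‖ ^ 2 := by
      have h : toE ((p₀ : ℂ) • (M₀ᴴ *ᵥ c₀) + (p₁ : ℂ) • (M₁ᴴ *ᵥ c₁)) =
          (p₀ : ℂ) • g₀ + (p₁ : ℂ) • g₁ := rfl
      rw [h, norm_add_sq (𝕜 := ℂ), inner_smul_left, inner_smul_right, Complex.conj_ofReal,
        norm_smul, norm_smul, norm_ofReal', norm_ofReal', abs_of_pos hp₀, abs_of_pos hp₁,
        ← mul_assoc, ← Complex.ofReal_mul, re_ofReal_mul']
      ring
    rw [expand]
    nlinarith [mul_pos hp₀ hp₁]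
  -- action of R on vectors
  have Rapply : ∀ u : Fin s → ℂ, R *ᵥ u =
      (p₀ : ℂ) • (M₀ᴴ *ᵥ (X⁻¹ *ᵥ (M₀ *ᵥ u))) + (p₁ : ℂ) • (M₁ᴴ *ᵥ (X⁻¹ *ᵥ (M₁ *ᵥ u))) := by
    intro u
    rw [hRdef, add_mulVec, smul_mulVec, smul_mulVec]
    simp only [Matrix.mulVec_mulVec, Matrix.mul_assoc]
  -- the main quadratic bound
  have main : ∀ u : Fin s → ℂ,
      0 ≤ RCLike.re (inner ℂ (toE u) (toE (R *ᵥ u)) : ℂ) ∧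
      RCLike.re (inner ℂ (toE u) (toE (R *ᵥ u)) : ℂ) ≤ ‖toE u‖ ^ 2 := by
    intro u
    set c₀ : Fin r → ℂ := X⁻¹ *ᵥ (M₀ *ᵥ u) with hc₀
    set c₁ : Fin r → ℂ := X⁻¹ *ᵥ (M₁ *ᵥ u) with hc₁
    set w : Fin s → ℂ := (p₀ : ℂ) • (M₀ᴴ *ᵥ c₀) + (p₁ : ℂ) • (M₁ᴴ *ᵥ c₁) with hw
    have hRu : R *ᵥ u = w := Rapply u
    have hXc₀ : X *ᵥ c₀ = M₀ *ᵥ u := by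
      rw [hc₀, Matrix.mulVec_mulVec, hXinv, one_mulVec]
    have hXc₁ : X *ᵥ c₁ = M₁ *ᵥ u := by
      rw [hc₁, Matrix.mulVec_mulVec, hXinv, one_mulVec]
    -- Q = re ⟪u, w⟫ equals the weighted quadratic forms
    have identity1 : RCLike.re (inner ℂ (toE u) (toE w) : ℂ) =
        p₀ * RCLike.re (inner ℂ (toE c₀) (toE (X *ᵥ c₀)) : ℂ) +
        p₁ * RCLike.re (inner ℂ (toE c₁) (toE (X *ᵥ c₁)) : ℂ) := by
      have h : (inner ℂ (toE u) (toE w) : ℂ) =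
          (p₀ : ℂ) * inner ℂ (toE (M₀ *ᵥ u)) (toE c₀) +
          (p₁ : ℂ) * inner ℂ (toE (M₁ *ᵥ u)) (toE c₁) := by
        rw [show toE w = (p₀ : ℂ) • toE (M₀ᴴ *ᵥ c₀) + (p₁ : ℂ) • toE (M₁ᴴ *ᵥ c₁) from rfl,
          inner_add_right, inner_smul_right, inner_smul_right,
          inner_mulVec_right M₀ᴴ, inner_mulVec_right M₁ᴴ,
          conjTranspose_conjTranspose, conjTranspose_conjTranspose]
      rw [h, map_add, re_ofReal_mul', re_ofReal_mul', hXc₀, hXc₁]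
      rw [inner_re_symm (toE (M₀ *ᵥ u)) (toE c₀), inner_re_symm (toE (M₁ *ᵥ u)) (toE c₁)]
    have hQw : ‖toE w‖ ^ 2 ≤ RCLike.re (inner ℂ (toE u) (toE w) : ℂ) := by
      rw [identity1]
      exact star_ineq c₀ c₁
    have hQv : RCLike.re (inner ℂ (toE u) (toE w) : ℂ) ≤ ‖toE u‖ * ‖toE w‖ :=
      re_inner_le_norm _ _
    have h0 : 0 ≤ RCLike.re (inner ℂ (toE u) (toE w) : ℂ) := le_trans (sq_nonneg _) hQw
    have h1' : RCLike.re (inner ℂ (toE u) (toE w) : ℂ) ≤ ‖toE u‖ ^ 2 :=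
      final_aux hQw hQv (norm_nonneg _) (norm_nonneg _)
    rw [hRu]
    exact ⟨h0, h1'⟩
  -- R is Hermitian
  have hRH : star R = R := by
    rw [Matrix.star_eq_conjTranspose, hRdef]
    simp only [conjTranspose_add, conjTranspose_smul, conjTranspose_mul,
      conjTranspose_conjTranspose, hXinvH, Complex.star_def, Complex.conj_ofReal]
    rw [Matrix.mul_assoc, Matrix.mul_assoc]
  -- pass to the CLM level
  set T := Matrix.toEuclideanCLM (𝕜 := ℂ) R with hT
  have hTapply : ∀ u : Fin s → ℂ, T (toE u) = toE (R *ᵥ u) := by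
    intro u
    rw [hT]; rfl
  have hTsa : IsSelfAdjoint T := by
    show star T = T
    rw [hT, ← map_star, hRH]
  have hT0 : (0 : EuclideanSpace ℂ (Fin s) →L[ℂ] EuclideanSpace ℂ (Fin s)) ≤ T := by
    rw [ContinuousLinearMap.nonneg_iff_isPositive, ContinuousLinearMap.isPositive_def']
    refine ⟨hTsa, fun x => ?_⟩
    have hx : toE ((WithLp.equiv 2 _) x) = x := (WithLp.equiv 2 _).symm_apply_apply x
    rw [ContinuousLinearMap.reApplyInnerSelf]
    rw [← hx, hTapply, inner_re_symm]
    exact (main _).1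
  have hT1 : T ≤ 1 := by
    rw [ContinuousLinearMap.le_def, ContinuousLinearMap.isPositive_def']
    refine ⟨(_root_.IsSelfAdjoint.one _).sub hTsa, fun x => ?_⟩
    have hx : toE ((WithLp.equiv 2 _) x) = x := (WithLp.equiv 2 _).symm_apply_apply x
    have hTx := hTapply ((WithLp.equiv 2 _) x)
    rw [hx] at hTx
    have hmain := (main ((WithLp.equiv 2 _) x)).2
    rw [hx] at hmain
    have hxx : RCLike.re (inner ℂ x x : ℂ) = ‖x‖ ^ 2 := inner_self_eq_norm_sq x
    rw [ContinuousLinearMap.reApplyInnerSelf, ContinuousLinearMap.sub_apply,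
      ContinuousLinearMap.one_apply, inner_sub_left, map_sub, hTx]
    have hsymm : RCLike.re (inner ℂ (toE (R *ᵥ (WithLp.equiv 2 _) x)) x : ℂ) =
        RCLike.re (inner ℂ x (toE (R *ᵥ (WithLp.equiv 2 _) x)) : ℂ) := inner_re_symm _ _
    linarith
  show ‖T‖ ≤ 1
  exact (CStarAlgebra.norm_le_one_iff_of_nonneg T hT0).mpr hT1
end
end

section
/- For all 1 ≤ i < j ≤ n and every unit vector φ in the kernel of H_n(ψ), one has ⟨φ| (|1⟩⟨1|_i ⊗ |v^⊥⟩⟨v^⊥|_j) |φ⟩ ≤ |λ|^{−2(j−i)} · s²/(1 − |c|), where |1⟩⟨1|_i acts on qubit i and |v^⊥⟩⟨v^⊥|_j acts on qubit j. -/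
open scoped BigOperators
open Matrix Polynomial

noncomputable section

/-- A two-site operator `A` applied to qubits `i` and `j` of an `n`-qubit chain,
acting as the identity on the remaining qubits. -/
def twoSite (n : ℕ) (A : Matrix (Fin 2 × Fin 2) (Fin 2 × Fin 2) ℂ) (i j : Fin n) :
    Matrix (Fin n → Fin 2) (Fin n → Fin 2) ℂ :=
  fun x y => A (x i, x j) (y i, y j) *
    ∏ k : Fin n, if k = i ∨ k = j then 1 else (if x k = y k then 1 else 0)

/-- The rank-one projector `|ψ⟩⟨ψ|` onto a two-qubit state `ψ`. -/
def vecProj (ψ : Fin 2 × Fin 2 → ℂ) : Matrix (Fin 2 × Fin 2) (Fin 2 × Fin 2) ℂ :=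
  fun a b => ψ a * star (ψ b)

/-- Open-boundary chain Hamiltonian with (possibly) site-dependent forbidden states:
`H_n(ψ₁,…,ψ_{n-1}) = Σ_j |ψ_j⟩⟨ψ_j|_{j,j+1}` (here `ψs` is 0-indexed). -/
def HnGen (n : ℕ) (ψs : ℕ → Fin 2 × Fin 2 → ℂ) :
    Matrix (Fin n → Fin 2) (Fin n → Fin 2) ℂ :=
  ∑ i : Fin n,
    if h : (i : ℕ) + 1 < n then twoSite n (vecProj (ψs (i : ℕ))) i ⟨(i : ℕ) + 1, h⟩ else 0

/-- Translation-invariant open-boundary Hamiltonian `H_n(ψ)`. -/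
def Hn (n : ℕ) (ψ : Fin 2 × Fin 2 → ℂ) : Matrix (Fin n → Fin 2) (Fin n → Fin 2) ℂ :=
  HnGen n fun _ => ψ

/-- The matrix `T_ψ`. -/
def Tmat (ψ : Fin 2 × Fin 2 → ℂ) : Matrix (Fin 2) (Fin 2) ℂ :=
  !![star (ψ (0, 1)), star (ψ (1, 1)); -star (ψ (0, 0)), -star (ψ (1, 0))]

/-- The projector onto the product state `u ⊗ ⋯ ⊗ u` on the qubits in the window `[a, b)`
(0-indexed), acting as the identity elsewhere. -/
def prodProjOn (n : ℕ) (u : Fin 2 → ℂ) (a b : ℕ) :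
    Matrix (Fin n → Fin 2) (Fin n → Fin 2) ℂ :=
  fun x y => ∏ k : Fin n,
    if a ≤ (k : ℕ) ∧ (k : ℕ) < b then u (x k) * star (u (y k))
    else (if x k = y k then 1 else 0)

/-! ### Auxiliary machinery -/

namespace CorrAux

variable {n : ℕ}

/-- Override a configuration at two sites. -/
def ov (x : Fin n → Fin 2) (p q : Fin n) (a b : Fin 2) : Fin n → Fin 2 :=
  fun m => if m = p then a else if m = q then b else x m

/-- Override a configuration at one site. -/
def ov1 (x : Fin n → Fin 2) (t : Fin n) (e : Fin 2) : Fin n → Fin 2 :=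
  fun m => if m = t then e else x m

lemma ov_apply_p (x : Fin n → Fin 2) (p q : Fin n) (a b : Fin 2) : ov x p q a b p = a := by
  simp [ov]

lemma ov_apply_q (x : Fin n → Fin 2) {p q : Fin n} (h : q ≠ p) (a b : Fin 2) :
    ov x p q a b q = b := by simp [ov, h]

lemma ov_apply_ne (x : Fin n → Fin 2) {p q m : Fin n} (h1 : m ≠ p) (h2 : m ≠ q) (a b : Fin 2) :
    ov x p q a b m = x m := by simp [ov, h1, h2]

lemma ov_ov (x : Fin n → Fin 2) (p q : Fin n) (a b a' b' : Fin 2) :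
    ov (ov x p q a b) p q a' b' = ov x p q a' b' := by
  funext m; by_cases h1 : m = p <;> by_cases h2 : m = q <;> simp [ov, h1, h2]

lemma ov_self (x : Fin n → Fin 2) (p q : Fin n) : ov x p q (x p) (x q) = x := by
  funext m
  by_cases h1 : m = p
  · simp [ov, h1]
  · by_cases h2 : m = q
    · subst h2; simp [ov, h1]
    · simp [ov, h1, h2]

/-- The fiber of configurations with prescribed values at two sites. -/
def fib (p q : Fin n) (a b : Fin 2) : Finset (Fin n → Fin 2) :=
  Finset.univ.filter (fun x => x p = a ∧ x q = b)

lemma mem_fib {p q : Fin n} {a b : Fin 2} {x : Fin n → Fin 2} :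
    x ∈ fib p q a b ↔ x p = a ∧ x q = b := by simp [fib]

lemma sum_fib_all {M : Type*} [AddCommMonoid M] (p q : Fin n) (F : (Fin n → Fin 2) → M) :
    ∑ x, F x = ∑ a : Fin 2, ∑ b : Fin 2, ∑ x ∈ fib p q a b, F x := by
  have h : ∀ x : Fin n → Fin 2,
      F x = ∑ a : Fin 2, ∑ b : Fin 2, if x p = a ∧ x q = b then F x else 0 := by
    intro x
    rw [Finset.sum_comm]
    rw [Finset.sum_eq_single (x q)]
    · rw [Finset.sum_eq_single (x p)]
      · simp
      · intro a _ ha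
        simp only [ite_eq_right_iff, and_imp]
        intro h _; exact absurd h.symm ha
      · simp
    · intro b _ hb
      apply Finset.sum_eq_zero; intro a _
      simp only [ite_eq_right_iff, and_imp]
      intro _ h; exact absurd h.symm hb
    · simp
  calc ∑ x, F x = ∑ x, ∑ a : Fin 2, ∑ b : Fin 2, (if x p = a ∧ x q = b then F x else 0) := by
        exact Finset.sum_congr rfl (fun x _ => h x)
    _ = ∑ a : Fin 2, ∑ b : Fin 2, ∑ x, (if x p = a ∧ x q = b then F x else 0) := by
        rw [Finset.sum_comm]; exact Finset.sum_congr rfl (fun a _ => Finset.sum_comm)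
    _ = ∑ a : Fin 2, ∑ b : Fin 2, ∑ x ∈ fib p q a b, F x := by
        refine Finset.sum_congr rfl (fun a _ => Finset.sum_congr rfl (fun b _ => ?_))
        rw [fib, Finset.sum_filter]

lemma sum_fib_reindex {M : Type*} [AddCommMonoid M] {p q : Fin n} (hpq : q ≠ p)
    (a b a' b' : Fin 2) (F : (Fin n → Fin 2) → M) :
    ∑ x ∈ fib p q a b, F (ov x p q a' b') = ∑ x ∈ fib p q a' b', F x := by
  refine Finset.sum_nbij' (fun x => ov x p q a' b') (fun x => ov x p q a b) ?_ ?_ ?_ ?_ ?_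
  · intro x _; exact mem_fib.mpr ⟨ov_apply_p _ _ _ _ _, ov_apply_q _ hpq _ _⟩
  · intro x _; exact mem_fib.mpr ⟨ov_apply_p _ _ _ _ _, ov_apply_q _ hpq _ _⟩
  · intro x hx; obtain ⟨h1, h2⟩ := mem_fib.mp hx
    show ov (ov x p q a' b') p q a b = x
    rw [ov_ov, ← h1, ← h2, ov_self]
  · intro x hx; obtain ⟨h1, h2⟩ := mem_fib.mp hx
    show ov (ov x p q a b) p q a' b' = x
    rw [ov_ov, ← h1, ← h2, ov_self]
  · intro x _; rfl

lemma ov1_apply_t (x : Fin n → Fin 2) (t : Fin n) (e : Fin 2) : ov1 x t e t = e := by simp [ov1]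

lemma ov1_apply_ne (x : Fin n → Fin 2) {t m : Fin n} (h : m ≠ t) (e : Fin 2) :
    ov1 x t e m = x m := by simp [ov1, h]

lemma ov1_ov1_eq_ov (x : Fin n → Fin 2) {I J : Fin n} (hJI : J ≠ I) (a b : Fin 2) :
    ov1 (ov1 x I a) J b = ov x I J a b := by
  funext m
  by_cases h1 : m = I
  · subst h1; simp [ov1, ov, hJI.symm, Ne.symm hJI]
  · by_cases h2 : m = J
    · subst h2; simp [ov1, ov, hJI]
    · simp [ov1, ov, h1, h2]

lemma prod_delta_eq (x y : Fin n → Fin 2) (S : Finset (Fin n)) :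
    (∏ k ∈ S, if x k = y k then (1 : ℂ) else 0) = if ∀ k ∈ S, x k = y k then 1 else 0 := by
  by_cases h : ∀ k ∈ S, x k = y k
  · rw [if_pos h]
    exact Finset.prod_eq_one (fun k hk => if_pos (h k hk))
  · rw [if_neg h]
    push_neg at h
    obtain ⟨k0, hk0, hne⟩ := h
    exact Finset.prod_eq_zero hk0 (if_neg hne)

lemma twoSite_mulVec (A : Matrix (Fin 2 × Fin 2) (Fin 2 × Fin 2) ℂ) (p q : Fin n)
    (hpq : q ≠ p) (g : (Fin n → Fin 2) → ℂ) (x : Fin n → Fin 2) :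
    (twoSite n A p q).mulVec g x
      = ∑ a : Fin 2, ∑ b : Fin 2, A (x p, x q) (a, b) * g (ov x p q a b) := by
  classical
  have hM : ∀ y, twoSite n A p q x y
      = A (x p, x q) (y p, y q) *
        (if ∀ k, k ≠ p → k ≠ q → x k = y k then (1 : ℂ) else 0) := by
    intro y
    unfold twoSite
    congr 1
    rw [← Finset.prod_filter_mul_prod_filter_not Finset.univ (fun k => k = p ∨ k = q)]
    rw [Finset.prod_eq_one (fun k hk => if_pos (Finset.mem_filter.mp hk).2), one_mul]
    have : ∀ k ∈ Finset.univ.filter (fun k => ¬(k = p ∨ k = q)),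
        (if k = p ∨ k = q then (1:ℂ) else if x k = y k then 1 else 0)
          = if x k = y k then 1 else 0 := by
      intro k hk; exact if_neg (Finset.mem_filter.mp hk).2
    rw [Finset.prod_congr rfl this, prod_delta_eq]
    congr 1
    simp only [Finset.mem_filter, Finset.mem_univ, true_and, not_or, eq_iff_iff]
    constructor
    · intro h k h1 h2; exact h k ⟨h1, h2⟩
    · intro h k hk; exact h k hk.1 hk.2
  unfold Matrix.mulVec dotProduct
  simp only [hM]
  have step : ∑ y : Fin n → Fin 2,
      A (x p, x q) (y p, y q) * (if ∀ k, k ≠ p → k ≠ q → x k = y k then (1:ℂ) else 0) * g y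
      = ∑ y ∈ Finset.univ.filter (fun y => ∀ k, k ≠ p → k ≠ q → x k = y k),
          A (x p, x q) (y p, y q) * g y := by
    rw [Finset.sum_filter]
    refine Finset.sum_congr rfl (fun y _ => ?_)
    by_cases h : ∀ k, k ≠ p → k ≠ q → x k = y k <;> simp [h]
  rw [step]
  have collapse : ∑ y ∈ Finset.univ.filter (fun y => ∀ k, k ≠ p → k ≠ q → x k = y k),
      A (x p, x q) (y p, y q) * g y
      = ∑ ab : Fin 2 × Fin 2, A (x p, x q) ab * g (ov x p q ab.1 ab.2) := by
    have ovy : ∀ y ∈ Finset.univ.filter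
        (fun y => ∀ k, k ≠ p → k ≠ q → x k = y k), ov x p q (y p) (y q) = y := by
      intro y hy
      have hy' := (Finset.mem_filter.mp hy).2
      funext m
      by_cases h1 : m = p
      · subst h1; rw [ov_apply_p]
      · by_cases h2 : m = q
        · subst h2; rw [ov_apply_q _ hpq]
        · rw [ov_apply_ne _ h1 h2, hy' m h1 h2]
    refine Finset.sum_nbij' (fun y => (y p, y q)) (fun ab => ov x p q ab.1 ab.2) ?_ ?_ ?_ ?_ ?_
    · intro y _; exact Finset.mem_univ _
    · intro ab _
      refine Finset.mem_filter.mpr ⟨Finset.mem_univ _, fun k h1 h2 => ?_⟩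
      rw [ov_apply_ne _ h1 h2]
    · intro y hy
      dsimp only
      exact ovy y hy
    · intro ab _
      simp [ov_apply_p, ov_apply_q _ hpq]
    · intro y hy
      dsimp only
      rw [ovy y hy]
  rw [collapse, Fintype.sum_prod_type]

lemma prodProjOn_single_mulVec (u : Fin 2 → ℂ) (t : Fin n) (aa bb : ℕ)
    (hw : ∀ k : Fin n, ((aa ≤ (k : ℕ) ∧ (k : ℕ) < bb) ↔ k = t))
    (g : (Fin n → Fin 2) → ℂ) (x : Fin n → Fin 2) :
    (prodProjOn n u aa bb).mulVec g x
      = u (x t) * ∑ e : Fin 2, star (u e) * g (ov1 x t e) := by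
  classical
  have hM : ∀ y, prodProjOn n u aa bb x y
      = u (x t) * star (u (y t)) *
        (if ∀ k, k ≠ t → x k = y k then (1 : ℂ) else 0) := by
    intro y
    unfold prodProjOn
    have hcong : ∀ k ∈ (Finset.univ : Finset (Fin n)),
        (if aa ≤ (k : ℕ) ∧ (k : ℕ) < bb then u (x k) * star (u (y k))
          else if x k = y k then 1 else 0)
        = (if k = t then u (x k) * star (u (y k)) else if x k = y k then 1 else 0) := by
      intro k _; exact if_congr (hw k) rfl rfl
    rw [Finset.prod_congr rfl hcong]
    rw [← Finset.prod_filter_mul_prod_filter_not Finset.univ (fun k => k = t)]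
    have h1 : Finset.univ.filter (fun k : Fin n => k = t) = {t} := by
      ext k; simp
    rw [h1, Finset.prod_singleton, if_pos rfl]
    congr 1
    have : ∀ k ∈ Finset.univ.filter (fun k : Fin n => ¬ k = t),
        (if k = t then u (x k) * star (u (y k)) else if x k = y k then (1:ℂ) else 0)
          = if x k = y k then 1 else 0 := by
      intro k hk; exact if_neg (Finset.mem_filter.mp hk).2
    rw [Finset.prod_congr rfl this, prod_delta_eq]
    congr 1
    simp only [Finset.mem_filter, Finset.mem_univ, true_and, eq_iff_iff]
  unfold Matrix.mulVec dotProduct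
  simp only [hM]
  have step : ∑ y : Fin n → Fin 2,
      u (x t) * star (u (y t)) * (if ∀ k, k ≠ t → x k = y k then (1:ℂ) else 0) * g y
      = ∑ y ∈ Finset.univ.filter (fun y => ∀ k, k ≠ t → x k = y k),
          u (x t) * star (u (y t)) * g y := by
    rw [Finset.sum_filter]
    refine Finset.sum_congr rfl (fun y _ => ?_)
    by_cases h : ∀ k, k ≠ t → x k = y k <;> simp [h]
  rw [step]
  have collapse : ∑ y ∈ Finset.univ.filter (fun y => ∀ k, k ≠ t → x k = y k),
      u (x t) * star (u (y t)) * g y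
      = ∑ e : Fin 2, u (x t) * star (u e) * g (ov1 x t e) := by
    have ovy : ∀ y ∈ Finset.univ.filter (fun y => ∀ k, k ≠ t → x k = y k),
        ov1 x t (y t) = y := by
      intro y hy
      have hy' := (Finset.mem_filter.mp hy).2
      funext m
      by_cases h1 : m = t
      · subst h1; rw [ov1_apply_t]
      · rw [ov1_apply_ne _ h1, hy' m h1]
    refine Finset.sum_nbij' (fun y => y t) (fun e => ov1 x t e) ?_ ?_ ?_ ?_ ?_
    · intro y _; exact Finset.mem_univ _
    · intro e _
      refine Finset.mem_filter.mpr ⟨Finset.mem_univ _, fun k h1 => ?_⟩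
      rw [ov1_apply_ne _ h1]
    · intro y hy; exact ovy y hy
    · intro e _; rw [ov1_apply_t]
    · intro y hy; rw [ovy y hy]
  rw [collapse, Finset.mul_sum]
  exact Finset.sum_congr rfl (fun e _ => by ring)

lemma sum_mulVec_eq {ι : Type*} [Fintype ι] {α : Type*} [Fintype α] [DecidableEq α]
    (F : ι → Matrix α α ℂ) (v : α → ℂ) :
    (∑ i, F i).mulVec v = ∑ i, (F i).mulVec v := by
  funext x
  simp only [Matrix.mulVec, dotProduct, Matrix.sum_apply, Finset.sum_apply,
    Finset.sum_mul]
  exact Finset.sum_comm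

lemma dot_sum_vec {ι : Type*} [Fintype ι] {α : Type*} [Fintype α]
    (w : α → ℂ) (g : ι → α → ℂ) :
    w ⬝ᵥ (∑ i, g i) = ∑ i, w ⬝ᵥ g i := by
  simp only [dotProduct, Finset.sum_apply, Finset.mul_sum]
  exact Finset.sum_comm

/-- The bond functional whose vanishing characterizes ground states. -/
def bf (ψ : Fin 2 × Fin 2 → ℂ) (φ : (Fin n → Fin 2) → ℂ) (p q : Fin n)
    (x : Fin n → Fin 2) : ℂ :=
  ∑ a : Fin 2, ∑ b : Fin 2, star (ψ (a, b)) * φ (ov x p q a b)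

lemma bf_ov (ψ : Fin 2 × Fin 2 → ℂ) (φ : (Fin n → Fin 2) → ℂ) (p q : Fin n)
    (x : Fin n → Fin 2) (a b : Fin 2) :
    bf ψ φ p q (ov x p q a b) = bf ψ φ p q x := by
  unfold bf
  refine Finset.sum_congr rfl (fun a' _ => Finset.sum_congr rfl (fun b' _ => ?_))
  rw [ov_ov]

lemma dot_twoSite (ψ : Fin 2 × Fin 2 → ℂ) (φ : (Fin n → Fin 2) → ℂ) (p q : Fin n)
    (hpq : q ≠ p) :
    star φ ⬝ᵥ (twoSite n (vecProj ψ) p q).mulVec φ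
      = ∑ x ∈ fib p q 0 0, (Complex.normSq (bf ψ φ p q x) : ℂ) := by
  have hw : ∀ x, (twoSite n (vecProj ψ) p q).mulVec φ x
      = ψ (x p, x q) * bf ψ φ p q x := by
    intro x
    rw [twoSite_mulVec _ _ _ hpq]
    unfold bf vecProj
    rw [Finset.mul_sum]
    refine Finset.sum_congr rfl (fun a _ => ?_)
    rw [Finset.mul_sum]
    refine Finset.sum_congr rfl (fun b _ => ?_)
    ring
  have hdot : star φ ⬝ᵥ (twoSite n (vecProj ψ) p q).mulVec φ
      = ∑ x, star (φ x) * (ψ (x p, x q) * bf ψ φ p q x) := by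
    unfold dotProduct
    exact Finset.sum_congr rfl (fun x _ => by rw [hw x, Pi.star_apply])
  rw [hdot, sum_fib_all (M := ℂ) p q (fun x => star (φ x) * (ψ (x p, x q) * bf ψ φ p q x))]
  have hfib : ∀ a b : Fin 2, ∑ x ∈ fib p q a b, star (φ x) * (ψ (x p, x q) * bf ψ φ p q x)
      = ∑ x ∈ fib p q 0 0, star (φ (ov x p q a b)) * (ψ (a, b) * bf ψ φ p q x) := by
    intro a b
    have h1 : ∑ x ∈ fib p q a b, star (φ x) * (ψ (x p, x q) * bf ψ φ p q x)
        = ∑ x ∈ fib p q a b, star (φ x) * (ψ (a, b) * bf ψ φ p q x) := by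
      refine Finset.sum_congr rfl (fun x hx => ?_)
      rw [(mem_fib.mp hx).1, (mem_fib.mp hx).2]
    rw [h1, ← sum_fib_reindex hpq 0 0 a b (fun x => star (φ x) * (ψ (a, b) * bf ψ φ p q x))]
    exact Finset.sum_congr rfl (fun x _ => by rw [bf_ov])
  calc ∑ a : Fin 2, ∑ b : Fin 2, ∑ x ∈ fib p q a b,
        star (φ x) * (ψ (x p, x q) * bf ψ φ p q x)
      = ∑ a : Fin 2, ∑ b : Fin 2, ∑ x ∈ fib p q 0 0,
          star (φ (ov x p q a b)) * (ψ (a, b) * bf ψ φ p q x) := by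
        exact Finset.sum_congr rfl (fun a _ => Finset.sum_congr rfl (fun b _ => hfib a b))
    _ = ∑ a : Fin 2, ∑ x ∈ fib p q 0 0, ∑ b : Fin 2,
          star (φ (ov x p q a b)) * (ψ (a, b) * bf ψ φ p q x) :=
        Finset.sum_congr rfl (fun a _ => Finset.sum_comm)
    _ = ∑ x ∈ fib p q 0 0, ∑ a : Fin 2, ∑ b : Fin 2,
          star (φ (ov x p q a b)) * (ψ (a, b) * bf ψ φ p q x) :=
        Finset.sum_comm
    _ = ∑ x ∈ fib p q 0 0, (Complex.normSq (bf ψ φ p q x) : ℂ) := by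
        refine Finset.sum_congr rfl (fun x _ => ?_)
        have : ∑ a : Fin 2, ∑ b : Fin 2, star (φ (ov x p q a b)) * (ψ (a, b) * bf ψ φ p q x)
            = star (bf ψ φ p q x) * bf ψ φ p q x := by
          unfold bf
          rw [star_sum, Finset.sum_mul]
          refine Finset.sum_congr rfl (fun a _ => ?_)
          rw [star_sum, Finset.sum_mul]
          refine Finset.sum_congr rfl (fun b _ => ?_)
          rw [star_mul', star_star]
          ring
        rw [this]
        exact (Complex.normSq_eq_conj_mul_self (z := bf ψ φ p q x)).symm

lemma bond_zero (ψ : Fin 2 × Fin 2 → ℂ) (φ : (Fin n → Fin 2) → ℂ)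
    (hφ : (Hn n ψ).mulVec φ = 0) :
    ∀ (p q : Fin n), (q : ℕ) = (p : ℕ) + 1 → ∀ x, bf ψ φ p q x = 0 := by
  classical
  have h0 : star φ ⬝ᵥ (Hn n ψ).mulVec φ = 0 := by rw [hφ, dotProduct_zero]
  rw [Hn, HnGen] at h0
  rw [sum_mulVec_eq (fun i : Fin n => if h : (i : ℕ) + 1 < n then
      twoSite n (vecProj ψ) i ⟨(i : ℕ) + 1, h⟩ else 0) φ] at h0
  rw [dot_sum_vec (star φ) (fun i : Fin n => ((if h : (i : ℕ) + 1 < n then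
      twoSite n (vecProj ψ) i ⟨(i : ℕ) + 1, h⟩ else 0)).mulVec φ)] at h0
  set r : Fin n → ℝ := fun i =>
    if h : (i : ℕ) + 1 < n then
      ∑ x ∈ fib i ⟨(i : ℕ) + 1, h⟩ 0 0, Complex.normSq (bf ψ φ i ⟨(i : ℕ) + 1, h⟩ x)
    else 0 with hr
  have hterm : ∀ i : Fin n,
      star φ ⬝ᵥ (if h : (i : ℕ) + 1 < n then
        twoSite n (vecProj ψ) i ⟨(i : ℕ) + 1, h⟩ else 0).mulVec φ = (r i : ℂ) := by
    intro i
    by_cases h : (i : ℕ) + 1 < n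
    · have e : (if h' : (i : ℕ) + 1 < n then
          twoSite n (vecProj ψ) i ⟨(i : ℕ) + 1, h'⟩ else 0)
          = twoSite n (vecProj ψ) i ⟨(i : ℕ) + 1, h⟩ := dif_pos h
      have hne : (⟨(i : ℕ) + 1, h⟩ : Fin n) ≠ i := by
        intro hcontra
        have h2 : (i : ℕ) + 1 = (i : ℕ) := by
          simpa using congrArg Fin.val hcontra
        omega
      rw [e, dot_twoSite ψ φ i ⟨(i : ℕ) + 1, h⟩ hne]
      simp only [hr]
      rw [dif_pos h, Complex.ofReal_sum]
    · have e : (if h' : (i : ℕ) + 1 < n then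
          twoSite n (vecProj ψ) i ⟨(i : ℕ) + 1, h'⟩ else 0)
          = (0 : Matrix (Fin n → Fin 2) (Fin n → Fin 2) ℂ) := dif_neg h
      rw [e]
      simp only [hr]
      rw [dif_neg h]
      simp [Matrix.zero_mulVec]
  rw [Finset.sum_congr rfl (fun i _ => hterm i)] at h0
  have hsum : ∑ i : Fin n, r i = 0 := by
    have := congrArg Complex.re h0
    rwa [Complex.re_sum] at this
    
  have hnonneg : ∀ i : Fin n, 0 ≤ r i := by
    intro i
    simp only [hr]
    by_cases h : (i : ℕ) + 1 < n
    · rw [dif_pos h]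
      exact Finset.sum_nonneg (fun x _ => Complex.normSq_nonneg _)
    · rw [dif_neg h]
  have hzero : ∀ i : Fin n, r i = 0 := by
    intro i
    have := (Finset.sum_eq_zero_iff_of_nonneg (fun i _ => hnonneg i)).mp hsum
    exact this i (Finset.mem_univ i)
  intro p q hq x
  have h : (p : ℕ) + 1 < n := by rw [← hq]; exact q.isLt
  have hqeq : q = ⟨(p : ℕ) + 1, h⟩ := Fin.ext hq
  have hne : q ≠ p := by
    intro hcontra; rw [hqeq] at hcontra
    have := congrArg Fin.val hcontra; simp at this
  have hrp := hzero p
  simp only [hr] at hrp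
  rw [dif_pos h] at hrp
  have hfib0 : ∀ y ∈ fib p (⟨(p : ℕ) + 1, h⟩ : Fin n) 0 0,
      bf ψ φ p ⟨(p : ℕ) + 1, h⟩ y = 0 := by
    intro y hy
    have := (Finset.sum_eq_zero_iff_of_nonneg
      (fun y _ => Complex.normSq_nonneg _)).mp hrp y hy
    exact Complex.normSq_eq_zero.mp this
  rw [hqeq]
  rw [← bf_ov ψ φ p ⟨(p : ℕ) + 1, h⟩ x 0 0]
  apply hfib0
  refine mem_fib.mpr ⟨ov_apply_p _ _ _ _ _, ov_apply_q _ ?_ _ _⟩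
  rw [← hqeq]; exact hne

lemma swap_base {ψ : Fin 2 × Fin 2 → ℂ} {φ : (Fin n → Fin 2) → ℂ} {μ₁ μ₂ c : ℂ} {s : ℝ}
    (h00 : star (ψ (0, 0)) = 0) (h01 : star (ψ (0, 1)) = μ₁)
    (h10 : star (ψ (1, 0)) = -μ₂) (hγ : (s : ℂ) * star (ψ (1, 1)) = c * (μ₂ - μ₁))
    (hbond : ∀ (p q : Fin n), (q : ℕ) = (p : ℕ) + 1 → ∀ x, bf ψ φ p q x = 0)
    (p q : Fin n) (hq : (q : ℕ) = (p : ℕ) + 1) (x : Fin n → Fin 2) :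
    μ₂ * ((s : ℂ) * φ (ov x p q 1 0) - c * φ (ov x p q 1 1))
      = μ₁ * ((s : ℂ) * φ (ov x p q 0 1) - c * φ (ov x p q 1 1)) := by
  have hb := hbond p q hq x
  unfold bf at hb
  rw [Fin.sum_univ_two] at hb
  rw [Fin.sum_univ_two, Fin.sum_univ_two] at hb
  rw [h00, h01, h10] at hb
  linear_combination (-(s : ℂ)) * hb + φ (ov x p q 1 1) * hγ

lemma main_ind {ψ : Fin 2 × Fin 2 → ℂ} {φ : (Fin n → Fin 2) → ℂ} {μ₁ μ₂ c : ℂ} {s : ℝ}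
    (hs0 : (s : ℂ) ≠ 0)
    (h00 : star (ψ (0, 0)) = 0) (h01 : star (ψ (0, 1)) = μ₁)
    (h10 : star (ψ (1, 0)) = -μ₂) (hγ : (s : ℂ) * star (ψ (1, 1)) = c * (μ₂ - μ₁))
    (hbond : ∀ (p q : Fin n), (q : ℕ) = (p : ℕ) + 1 → ∀ x, bf ψ φ p q x = 0) :
    ∀ d : ℕ, 1 ≤ d → ∀ (p q : Fin n), (q : ℕ) = (p : ℕ) + d → ∀ x : Fin n → Fin 2,
      μ₂ ^ d * ((s : ℂ) * φ (ov x p q 1 0) - c * φ (ov x p q 1 1))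
        = μ₁ ^ d * ((s : ℂ) * φ (ov x p q 0 1) - c * φ (ov x p q 1 1)) := by
  intro d
  induction d with
  | zero => intro h; omega
  | succ d ih =>
    intro _ p q hq x
    by_cases hd : d = 0
    · subst hd
      have hq1 : (q : ℕ) = (p : ℕ) + 1 := by omega
      simpa [pow_one] using swap_base h00 h01 h10 hγ hbond p q hq1 x
    · have hd1 : 1 ≤ d := Nat.one_le_iff_ne_zero.mpr hd
      have hp1lt : (p : ℕ) + 1 < n := by have := q.isLt; omega
      set p1 : Fin n := ⟨(p : ℕ) + 1, hp1lt⟩ with hp1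
      have hvp1 : (p1 : ℕ) = (p : ℕ) + 1 := rfl
      have hqp1 : (q : ℕ) = (p1 : ℕ) + d := by omega
      have hpp1 : p ≠ p1 := by
        intro hcontra
        have := congrArg Fin.val hcontra
        omega
      have hpq : p ≠ q := by
        intro hcontra
        have := congrArg Fin.val hcontra
        omega
      have hp1q : p1 ≠ q := by
        intro hcontra
        have := congrArg Fin.val hcontra
        omega
      -- normal-form configurations
      have E1 : ∀ A B : Fin 2, ov x p q A B
          = (fun m => if m = p then A else if m = p1 then x p1 else
              if m = q then B else x m) := by
        intro A B
        funext m
        by_cases h1 : m = p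
        · subst h1; simp [ov]
        · by_cases h2 : m = p1
          · subst h2
            rw [ov_apply_ne _ (Ne.symm hpp1) hp1q]
            simp [Ne.symm hpp1, hp1q]
          · by_cases h3 : m = q
            · subst h3; simp [ov, h1, Ne.symm hp1q]
            · rw [ov_apply_ne _ h1 h3]
              simp [h1, h2, h3]
      have E2 : ∀ (A E b : Fin 2), ov (fun m => if m = q then b else x m) p p1 A E
          = (fun m => if m = p then A else if m = p1 then E else
              if m = q then b else x m) := by
        intro A E b; rfl
      have E3 : ∀ (a E B : Fin 2), ov (fun m => if m = p then a else x m) p1 q E B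
          = (fun m => if m = p then a else if m = p1 then E else
              if m = q then B else x m) := by
        intro a E B
        funext m
        by_cases h1 : m = p
        · subst h1
          rw [ov_apply_ne _ hpp1 hpq]
          simp [hpp1, hpq]
        · by_cases h2 : m = p1
          · subst h2; simp [ov, h1]
          · by_cases h3 : m = q
            · subst h3; simp [ov, h1, h2, Ne.symm hp1q]
            · rw [ov_apply_ne _ h2 h3]
              simp [h1, h2, h3]
      have hB : ∀ b : Fin 2,
          μ₂ * ((s : ℂ) * φ (fun m => if m = p then 1 else if m = p1 then 0 else
                  if m = q then b else x m)
              - c * φ (fun m => if m = p then 1 else if m = p1 then 1 else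
                  if m = q then b else x m))
          = μ₁ * ((s : ℂ) * φ (fun m => if m = p then 0 else if m = p1 then 1 else
                  if m = q then b else x m)
              - c * φ (fun m => if m = p then 1 else if m = p1 then 1 else
                  if m = q then b else x m)) := by
        intro b
        have h := swap_base h00 h01 h10 hγ hbond p p1 hvp1
          (fun m => if m = q then b else x m)
        rw [E2, E2, E2] at h
        exact h
      have hM : ∀ a : Fin 2,
          μ₂ ^ d * ((s : ℂ) * φ (fun m => if m = p then a else if m = p1 then 1 else
                  if m = q then 0 else x m)
              - c * φ (fun m => if m = p then a else if m = p1 then 1 else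
                  if m = q then 1 else x m))
          = μ₁ ^ d * ((s : ℂ) * φ (fun m => if m = p then a else if m = p1 then 0 else
                  if m = q then 1 else x m)
              - c * φ (fun m => if m = p then a else if m = p1 then 1 else
                  if m = q then 1 else x m)) := by
        intro a
        have h := ih hd1 p1 q hqp1 (fun m => if m = p then a else x m)
        rw [E3, E3, E3] at h
        exact h
      rw [E1, E1, E1]
      have hx1 : x p1 = 0 ∨ x p1 = 1 := by
        rcases (Fin.exists_fin_two).mp ⟨x p1, rfl⟩ with h
        omega
      rcases hx1 with he | he <;> rw [he]
      · -- x p1 = 0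
        have key : (s : ℂ) * (μ₂ ^ (d + 1) *
            ((s : ℂ) * φ (fun m => if m = p then 1 else if m = p1 then 0 else
                if m = q then 0 else x m)
              - c * φ (fun m => if m = p then 1 else if m = p1 then 0 else
                if m = q then 1 else x m)))
            = (s : ℂ) * (μ₁ ^ (d + 1) *
            ((s : ℂ) * φ (fun m => if m = p then 0 else if m = p1 then 0 else
                if m = q then 1 else x m)
              - c * φ (fun m => if m = p then 1 else if m = p1 then 0 else
                if m = q then 1 else x m))) := by
          linear_combination (c * μ₂ - μ₁ * c) * hM 1 + (c * μ₁ ^ d - c * μ₂ ^ d) * hB 1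
            + (s : ℂ) * μ₂ ^ d * hB 0 + μ₁ * (s : ℂ) * hM 0
        exact mul_left_cancel₀ hs0 key
      · -- x p1 = 1
        linear_combination μ₂ * hM 1 + μ₁ ^ d * hB 1

lemma nsq_combo_le {c : ℂ} {s : ℝ} (hcs : Complex.normSq c + s ^ 2 = 1) (u v : ℂ) :
    Complex.normSq ((s : ℂ) * u - c * v) ≤ Complex.normSq u + Complex.normSq v := by
  have h1 : ‖(s : ℂ) * u - c * v‖
      ≤ |s| * ‖u‖ + ‖c‖ * ‖v‖ := by
    calc ‖(s : ℂ) * u - c * v‖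
        ≤ ‖(s : ℂ) * u‖ + ‖c * v‖ := by
          exact norm_sub_le _ _
      _ = |s| * ‖u‖ + ‖c‖ * ‖v‖ := by
          rw [norm_mul, norm_mul, Complex.norm_real, Real.norm_eq_abs]
  have h2 : ‖(s : ℂ) * u - c * v‖ ^ 2
      ≤ (|s| * ‖u‖ + ‖c‖ * ‖v‖) ^ 2 :=
    pow_le_pow_left₀ (norm_nonneg _) h1 2
  have e0 : ‖(s : ℂ) * u - c * v‖ ^ 2 = Complex.normSq ((s : ℂ) * u - c * v) :=
    Complex.sq_norm _
  have e1 : ‖u‖ ^ 2 = Complex.normSq u := Complex.sq_norm u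
  have e2 : ‖v‖ ^ 2 = Complex.normSq v := Complex.sq_norm v
  have e3 : ‖c‖ ^ 2 = Complex.normSq c := Complex.sq_norm c
  have e4 : |s| ^ 2 = s ^ 2 := sq_abs s
  nlinarith [sq_nonneg (‖c‖ * ‖u‖ - |s| * ‖v‖),
    norm_nonneg u, norm_nonneg v]

lemma dot_proj_pair (φ : (Fin n → Fin 2) → ℂ) (I J : Fin n) (hJI : J ≠ I)
    (ia ib ja jb : ℕ) (c : ℂ) (s : ℝ)
    (hwP : ∀ k : Fin n, ((ia ≤ (k : ℕ) ∧ (k : ℕ) < ib) ↔ k = I))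
    (hwQ : ∀ k : Fin n, ((ja ≤ (k : ℕ) ∧ (k : ℕ) < jb) ↔ k = J)) :
    star φ ⬝ᵥ ((prodProjOn n ![0, 1] ia ib *
        prodProjOn n ![(s : ℂ), -(starRingEnd ℂ) c] ja jb).mulVec φ)
      = ∑ x ∈ fib I J 1 0,
          (Complex.normSq ((s : ℂ) * φ (ov x I J 1 0) - c * φ (ov x I J 1 1)) : ℂ) := by
  classical
  have hstep0 : (prodProjOn n ![0, 1] ia ib *
      prodProjOn n ![(s : ℂ), -(starRingEnd ℂ) c] ja jb).mulVec φ
      = (prodProjOn n ![0, 1] ia ib).mulVec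
          ((prodProjOn n ![(s : ℂ), -(starRingEnd ℂ) c] ja jb).mulVec φ) :=
    (Matrix.mulVec_mulVec _ _ _).symm
  have hx : ∀ x : Fin n → Fin 2,
      (prodProjOn n ![0, 1] ia ib).mulVec
        ((prodProjOn n ![(s : ℂ), -(starRingEnd ℂ) c] ja jb).mulVec φ) x
      = (![0, 1] : Fin 2 → ℂ) (x I) *
          ((![(s : ℂ), -(starRingEnd ℂ) c] : Fin 2 → ℂ) (x J) *
            ((s : ℂ) * φ (ov x I J 1 0) - c * φ (ov x I J 1 1))) := by
    intro x
    rw [prodProjOn_single_mulVec _ I ia ib hwP _ x]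
    congr 1
    rw [Fin.sum_univ_two]
    simp only [Matrix.cons_val_zero, Matrix.cons_val_one, Matrix.head_cons, star_zero,
      star_one, zero_mul, one_mul, zero_add]
    rw [prodProjOn_single_mulVec _ J ja jb hwQ φ _]
    rw [ov1_apply_ne _ hJI]
    congr 1
    rw [Fin.sum_univ_two, ov1_ov1_eq_ov x hJI 1 0, ov1_ov1_eq_ov x hJI 1 1]
    simp only [Matrix.cons_val_zero, Matrix.cons_val_one, Matrix.head_cons,
      Complex.star_def, Complex.conj_ofReal, map_neg, Complex.conj_conj]
    ring
  have hdot : star φ ⬝ᵥ ((prodProjOn n ![0, 1] ia ib *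
      prodProjOn n ![(s : ℂ), -(starRingEnd ℂ) c] ja jb).mulVec φ)
      = ∑ x : Fin n → Fin 2, star (φ x) *
          ((![0, 1] : Fin 2 → ℂ) (x I) *
            ((![(s : ℂ), -(starRingEnd ℂ) c] : Fin 2 → ℂ) (x J) *
              ((s : ℂ) * φ (ov x I J 1 0) - c * φ (ov x I J 1 1)))) := by
    rw [hstep0]
    unfold dotProduct
    exact Finset.sum_congr rfl (fun x _ => by rw [hx x, Pi.star_apply])
  rw [hdot]
  rw [sum_fib_all (M := ℂ) I J (fun x => star (φ x) *
      ((![0, 1] : Fin 2 → ℂ) (x I) *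
        ((![(s : ℂ), -(starRingEnd ℂ) c] : Fin 2 → ℂ) (x J) *
          ((s : ℂ) * φ (ov x I J 1 0) - c * φ (ov x I J 1 1)))))]
  have hKov : ∀ (x : Fin n → Fin 2) (a b : Fin 2),
      (s : ℂ) * φ (ov (ov x I J a b) I J 1 0) - c * φ (ov (ov x I J a b) I J 1 1)
        = (s : ℂ) * φ (ov x I J 1 0) - c * φ (ov x I J 1 1) := by
    intro x a b; rw [ov_ov, ov_ov]
  have hfib : ∀ a b : Fin 2,
      ∑ x ∈ fib I J a b, star (φ x) *
        ((![0, 1] : Fin 2 → ℂ) (x I) *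
          ((![(s : ℂ), -(starRingEnd ℂ) c] : Fin 2 → ℂ) (x J) *
            ((s : ℂ) * φ (ov x I J 1 0) - c * φ (ov x I J 1 1))))
      = ∑ x ∈ fib I J 1 0, star (φ (ov x I J a b)) *
          ((![0, 1] : Fin 2 → ℂ) a *
            ((![(s : ℂ), -(starRingEnd ℂ) c] : Fin 2 → ℂ) b *
              ((s : ℂ) * φ (ov x I J 1 0) - c * φ (ov x I J 1 1)))) := by
    intro a b
    have h1 : ∑ x ∈ fib I J a b, star (φ x) *
        ((![0, 1] : Fin 2 → ℂ) (x I) *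
          ((![(s : ℂ), -(starRingEnd ℂ) c] : Fin 2 → ℂ) (x J) *
            ((s : ℂ) * φ (ov x I J 1 0) - c * φ (ov x I J 1 1))))
        = ∑ x ∈ fib I J a b, star (φ x) *
        ((![0, 1] : Fin 2 → ℂ) a *
          ((![(s : ℂ), -(starRingEnd ℂ) c] : Fin 2 → ℂ) b *
            ((s : ℂ) * φ (ov x I J 1 0) - c * φ (ov x I J 1 1)))) := by
      refine Finset.sum_congr rfl (fun x hx' => ?_)
      rw [(mem_fib.mp hx').1, (mem_fib.mp hx').2]
    rw [h1, ← sum_fib_reindex hJI 1 0 a b (fun x => star (φ x) *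
        ((![0, 1] : Fin 2 → ℂ) a *
          ((![(s : ℂ), -(starRingEnd ℂ) c] : Fin 2 → ℂ) b *
            ((s : ℂ) * φ (ov x I J 1 0) - c * φ (ov x I J 1 1)))))]
    exact Finset.sum_congr rfl (fun x _ => by rw [hKov])
  calc ∑ a : Fin 2, ∑ b : Fin 2, ∑ x ∈ fib I J a b, star (φ x) *
        ((![0, 1] : Fin 2 → ℂ) (x I) *
          ((![(s : ℂ), -(starRingEnd ℂ) c] : Fin 2 → ℂ) (x J) *
            ((s : ℂ) * φ (ov x I J 1 0) - c * φ (ov x I J 1 1))))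
      = ∑ a : Fin 2, ∑ b : Fin 2, ∑ x ∈ fib I J 1 0, star (φ (ov x I J a b)) *
          ((![0, 1] : Fin 2 → ℂ) a *
            ((![(s : ℂ), -(starRingEnd ℂ) c] : Fin 2 → ℂ) b *
              ((s : ℂ) * φ (ov x I J 1 0) - c * φ (ov x I J 1 1)))) :=
        Finset.sum_congr rfl (fun a _ => Finset.sum_congr rfl (fun b _ => hfib a b))
    _ = ∑ a : Fin 2, ∑ x ∈ fib I J 1 0, ∑ b : Fin 2, star (φ (ov x I J a b)) *
          ((![0, 1] : Fin 2 → ℂ) a *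
            ((![(s : ℂ), -(starRingEnd ℂ) c] : Fin 2 → ℂ) b *
              ((s : ℂ) * φ (ov x I J 1 0) - c * φ (ov x I J 1 1)))) :=
        Finset.sum_congr rfl (fun a _ => Finset.sum_comm)
    _ = ∑ x ∈ fib I J 1 0, ∑ a : Fin 2, ∑ b : Fin 2, star (φ (ov x I J a b)) *
          ((![0, 1] : Fin 2 → ℂ) a *
            ((![(s : ℂ), -(starRingEnd ℂ) c] : Fin 2 → ℂ) b *
              ((s : ℂ) * φ (ov x I J 1 0) - c * φ (ov x I J 1 1)))) :=
        Finset.sum_comm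
    _ = ∑ x ∈ fib I J 1 0,
          (Complex.normSq ((s : ℂ) * φ (ov x I J 1 0) - c * φ (ov x I J 1 1)) : ℂ) := by
        refine Finset.sum_congr rfl (fun x _ => ?_)
        rw [Fin.sum_univ_two, Fin.sum_univ_two, Fin.sum_univ_two]
        rw [← Complex.mul_conj]
        simp only [Matrix.cons_val_zero, Matrix.cons_val_one, Matrix.head_cons,
          Complex.star_def, map_sub, _root_.map_mul, Complex.conj_ofReal]
        ring

end CorrAux

end

/-- **Decay of the two-point correlator in ground states.** In the gapped setting
(`|μ₁| < |μ₂|`, `μ₁ ≠ 0`, basis chosen so that `T_ψ|0⟩ = μ₁|0⟩`, `T_ψ|v⟩ = μ₂|v⟩` with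
`v = c|0⟩ + s|1⟩`, `s > 0`), every normalized ground state `φ` of `H_n(ψ)` satisfies
`⟨φ| |1⟩⟨1|_i ⊗ |v^⊥⟩⟨v^⊥|_j |φ⟩ ≤ |λ|^{−2(j−i)} s²/(1−|c|)` for `1 ≤ i < j ≤ n`,
where `λ = μ₂/μ₁` and `v^⊥ = s|0⟩ − c̄|1⟩`. (Qubits are numbered `1, …, n`.) -/
theorem correlator_bound
    (ψ : Fin 2 × Fin 2 → ℂ) (hψ : ∑ a, Complex.normSq (ψ a) = 1)
    (μ₁ μ₂ : ℂ) (hchar : (Tmat ψ).charpoly = (X - C μ₁) * (X - C μ₂))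
    (habs : ‖μ₁‖ < ‖μ₂‖) (hμ₁ : μ₁ ≠ 0)
    (c : ℂ) (s : ℝ) (hs : 0 < s) (hcs : Complex.normSq c + s ^ 2 = 1)
    (hT0 : (Tmat ψ).mulVec ![1, 0] = μ₁ • ![1, 0])
    (hTv : (Tmat ψ).mulVec ![c, (s : ℂ)] = μ₂ • ![c, (s : ℂ)])
    (n : ℕ) (i j : ℕ) (hi : 1 ≤ i) (hij : i < j) (hj : j ≤ n)
    (φ : (Fin n → Fin 2) → ℂ)
    (hφ : φ ∈ LinearMap.ker (Hn n ψ).mulVecLin)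
    (hφn : ∑ x, Complex.normSq (φ x) = 1) :
    (star φ ⬝ᵥ ((prodProjOn n ![0, 1] (i - 1) i *
        prodProjOn n ![(s : ℂ), -(starRingEnd ℂ) c] (j - 1) j).mulVec φ)).re ≤
      (‖μ₂ / μ₁‖ ^ (2 * (j - i)))⁻¹ * s ^ 2 / (1 - ‖c‖) := by
  classical
  open CorrAux in
  have hs0 : (s : ℂ) ≠ 0 := Complex.ofReal_ne_zero.mpr (ne_of_gt hs)
  -- extract the scalar facts about ψ
  have e00 := congrFun hT0 0
  have e01 := congrFun hT0 1
  have ev0 := congrFun hTv 0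
  have ev1 := congrFun hTv 1
  simp [Tmat, Matrix.mulVec, dotProduct, Fin.sum_univ_two] at e00 e01 ev0 ev1
  have e01' : (starRingEnd ℂ) (ψ (0, 0)) = 0 := by
    have h : ψ (0, 0) = 0 := e01
    rw [h, map_zero]
  have ev0'' : (starRingEnd ℂ) (ψ (0, 1)) * c + (starRingEnd ℂ) (ψ (1, 1)) * (s : ℂ)
      = μ₂ * c := ev0
  have ev1'' : -((starRingEnd ℂ) (ψ (0, 0)) * c) + -((starRingEnd ℂ) (ψ (1, 0)) * (s : ℂ))
      = μ₂ * (s : ℂ) := ev1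
  have h00 : star (ψ (0, 0)) = 0 := e01'
  have h01 : star (ψ (0, 1)) = μ₁ := e00
  have h10 : star (ψ (1, 0)) = -μ₂ := by
    have key : (starRingEnd ℂ) (ψ (1, 0)) * (s : ℂ) = -μ₂ * (s : ℂ) := by
      linear_combination -ev1'' - c * e01'
    exact mul_right_cancel₀ hs0 key
  have hγ : (s : ℂ) * star (ψ (1, 1)) = c * (μ₂ - μ₁) := by
    have key : (s : ℂ) * (starRingEnd ℂ) (ψ (1, 1)) = c * (μ₂ - μ₁) := by
      linear_combination ev0'' - c * e00
    exact key
  -- ground-state bond conditions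
  have hφ' : (Hn n ψ).mulVec φ = 0 := by
    have h := LinearMap.mem_ker.mp hφ
    rwa [Matrix.mulVecLin_apply] at h
  have hbond := bond_zero ψ φ hφ'
  -- the two sites
  have hin : i - 1 < n := by omega
  have hjn : j - 1 < n := by omega
  have hJI : (⟨j - 1, hjn⟩ : Fin n) ≠ (⟨i - 1, hin⟩ : Fin n) := by
    intro h
    have := congrArg Fin.val h
    simp at this
    omega
  have hD1 : 1 ≤ j - i := by omega
  have hJIv : ((⟨j - 1, hjn⟩ : Fin n) : ℕ) = ((⟨i - 1, hin⟩ : Fin n) : ℕ) + (j - i) := by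
    simp; omega
  have hwP : ∀ k : Fin n, ((i - 1 ≤ (k : ℕ) ∧ (k : ℕ) < i) ↔ k = ⟨i - 1, hin⟩) := by
    intro k
    rw [Fin.ext_iff]
    simp only []
    omega
  have hwQ : ∀ k : Fin n, ((j - 1 ≤ (k : ℕ) ∧ (k : ℕ) < j) ↔ k = ⟨j - 1, hjn⟩) := by
    intro k
    rw [Fin.ext_iff]
    simp only []
    omega
  set I : Fin n := ⟨i - 1, hin⟩
  set J : Fin n := ⟨j - 1, hjn⟩
  -- quadratic form as a fiber sum
  rw [dot_proj_pair φ I J hJI (i - 1) i (j - 1) j c s hwP hwQ]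
  rw [← Complex.ofReal_sum, Complex.ofReal_re]
  -- the transport identity
  have hrel : ∀ x : Fin n → Fin 2,
      μ₂ ^ (j - i) * ((s : ℂ) * φ (ov x I J 1 0) - c * φ (ov x I J 1 1))
        = μ₁ ^ (j - i) * ((s : ℂ) * φ (ov x I J 0 1) - c * φ (ov x I J 1 1)) :=
    main_ind hs0 h00 h01 h10 hγ hbond (j - i) hD1 I J hJIv
  have hμ2 : μ₂ ≠ 0 := by
    intro h
    rw [h] at habs
    simp only [norm_zero] at habs
    exact absurd habs (not_lt.mpr (norm_nonneg _))
  have ha1 : 0 < ‖μ₁‖ := norm_pos_iff.mpr hμ₁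
  have ha2 : 0 < ‖μ₂‖ := lt_of_le_of_lt (norm_nonneg _) habs
  have hn2pos : 0 < Complex.normSq μ₂ := Complex.normSq_pos.mpr hμ2
  have hn2Dne : Complex.normSq μ₂ ^ (j - i) ≠ 0 := pow_ne_zero _ (ne_of_gt hn2pos)
  have hnsq : ∀ x : Fin n → Fin 2,
      Complex.normSq ((s : ℂ) * φ (ov x I J 1 0) - c * φ (ov x I J 1 1))
        = Complex.normSq μ₁ ^ (j - i) / Complex.normSq μ₂ ^ (j - i) *
            Complex.normSq ((s : ℂ) * φ (ov x I J 0 1) - c * φ (ov x I J 1 1)) := by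
    intro x
    have h := congrArg Complex.normSq (hrel x)
    rw [_root_.map_mul, _root_.map_mul, _root_.map_pow, _root_.map_pow] at h
    rw [div_mul_eq_mul_div, eq_div_iff hn2Dne]
    linear_combination h
  rw [Finset.sum_congr rfl (fun x _ => hnsq x), ← Finset.mul_sum]
  have hLsum : ∑ x ∈ fib I J 1 0,
      Complex.normSq ((s : ℂ) * φ (ov x I J 0 1) - c * φ (ov x I J 1 1)) ≤ 1 := by
    have h1 : ∀ x ∈ fib I J 1 0,
        Complex.normSq ((s : ℂ) * φ (ov x I J 0 1) - c * φ (ov x I J 1 1))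
          ≤ Complex.normSq (φ (ov x I J 0 1)) + Complex.normSq (φ (ov x I J 1 1)) :=
      fun x _ => nsq_combo_le hcs _ _
    have h2 := Finset.sum_le_sum h1
    have h3 : ∑ x ∈ fib I J 1 0,
        (Complex.normSq (φ (ov x I J 0 1)) + Complex.normSq (φ (ov x I J 1 1)))
        = (∑ x ∈ fib I J 0 1, Complex.normSq (φ x))
          + ∑ x ∈ fib I J 1 1, Complex.normSq (φ x) := by
      rw [Finset.sum_add_distrib,
        sum_fib_reindex hJI 1 0 0 1 (fun x => Complex.normSq (φ x)),
        sum_fib_reindex hJI 1 0 1 1 (fun x => Complex.normSq (φ x))]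
    have hdisj : Disjoint (fib I J 0 1) (fib (n := n) I J 1 1) := by
      rw [Finset.disjoint_left]
      intro x hx hx'
      have h1' := (mem_fib.mp hx).1
      have h2' := (mem_fib.mp hx').1
      rw [h1'] at h2'
      exact absurd h2' (by decide)
    have h4 : (∑ x ∈ fib I J 0 1, Complex.normSq (φ x))
        + ∑ x ∈ fib I J 1 1, Complex.normSq (φ x)
        = ∑ x ∈ fib I J 0 1 ∪ fib I J 1 1, Complex.normSq (φ x) :=
      (Finset.sum_union hdisj).symm
    have h5 : ∑ x ∈ fib I J 0 1 ∪ fib I J 1 1, Complex.normSq (φ x)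
        ≤ ∑ x : Fin n → Fin 2, Complex.normSq (φ x) :=
      Finset.sum_le_sum_of_subset_of_nonneg (Finset.subset_univ _)
        (fun x _ _ => Complex.normSq_nonneg _)
    rw [hφn] at h5
    linarith
  have hXeq : Complex.normSq μ₁ ^ (j - i) / Complex.normSq μ₂ ^ (j - i)
      = (‖μ₂ / μ₁‖ ^ (2 * (j - i)))⁻¹ := by
    rw [norm_div, div_pow, inv_div]
    rw [← Complex.sq_norm μ₁, ← Complex.sq_norm μ₂, ← pow_mul, ← pow_mul]
  rw [hXeq]
  have hXnn : (0 : ℝ) ≤ (‖μ₂ / μ₁‖ ^ (2 * (j - i)))⁻¹ :=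
    inv_nonneg.mpr (pow_nonneg (norm_nonneg _) _)
  have hc1 : ‖c‖ < 1 := by
    nlinarith [Complex.sq_norm c, Complex.normSq_nonneg c,
      norm_nonneg c, hs, sq_nonneg s]
  have hone : (1 : ℝ) ≤ s ^ 2 / (1 - ‖c‖) := by
    rw [le_div_iff₀ (by linarith)]
    nlinarith [Complex.sq_norm c, norm_nonneg c]
  calc (‖μ₂ / μ₁‖ ^ (2 * (j - i)))⁻¹ *
        ∑ x ∈ fib I J 1 0,
          Complex.normSq ((s : ℂ) * φ (ov x I J 0 1) - c * φ (ov x I J 1 1))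
      ≤ (‖μ₂ / μ₁‖ ^ (2 * (j - i)))⁻¹ * (s ^ 2 / (1 - ‖c‖)) := by
        apply mul_le_mul_of_nonneg_left _ hXnn
        exact le_trans hLsum hone
    _ = (‖μ₂ / μ₁‖ ^ (2 * (j - i)))⁻¹ * s ^ 2 / (1 - ‖c‖) := by
        rw [mul_div_assoc]
end

section
/- Let R(θ) be the 2×2 real rotation matrix with first row (cos θ, sin θ) and second row (−sin θ, cos θ). For 0 ≤ p ≤ 1/2 and θ₁, θ₂ ∈ [0,π], let ψ₊ = (R(θ₁)⊗R(θ₂))(√(1−p)|0,0⟩ + √p|1,1⟩) and ψ₋ = (R(θ₁)⊗R(θ₂))(√(1−p)|0,0⟩ − √p|1,1⟩). Then the two eigenvalues of T_{ψ₊} have equal non-zero absolute value if and only if p > 0 and sin²(θ₂−θ₁) ≤ 4/(2 + (p(1−p))^{−1/2}); and the two eigenvalues of T_{ψ₋} have equal non-zero absolute value if and only if either p = 1/2, or sin(θ₂−θ₁) = 0 and 0 < p < 1. -/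
open scoped BigOperators
open Matrix Polynomial

noncomputable section

/-- The real rotation matrix `R(θ)`. -/
def Rrot (θ : ℝ) : Matrix (Fin 2) (Fin 2) ℝ :=
  !![Real.cos θ, Real.sin θ; -Real.sin θ, Real.cos θ]

/-- The real two-qubit state `(R(θ₁)⊗R(θ₂))(√(1−p)|0,0⟩ + ε√p|1,1⟩)` with `ε = ±1`. -/
def psiReal (p θ₁ θ₂ ε : ℝ) : Fin 2 × Fin 2 → ℂ :=
  fun q => ((Real.sqrt (1 - p) * Rrot θ₁ q.1 0 * Rrot θ₂ q.2 0 +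
    ε * Real.sqrt p * Rrot θ₁ q.1 1 * Rrot θ₂ q.2 1 : ℝ) : ℂ)

/-- The two eigenvalues of a 2×2 matrix `M` have equal non-zero absolute value. -/
def EqualNonzeroAbsEigs (M : Matrix (Fin 2) (Fin 2) ℂ) : Prop :=
  ∃ μ₁ μ₂ : ℂ, M.charpoly = (X - C μ₁) * (X - C μ₂) ∧
    ‖μ₁‖ = ‖μ₂‖ ∧ μ₁ ≠ 0 ∧ μ₂ ≠ 0

/-- Characteristic polynomial of a 2×2 complex matrix. -/
lemma charpoly_fin_two' (M : Matrix (Fin 2) (Fin 2) ℂ) :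
    M.charpoly = X^2 - C (M 0 0 + M 1 1) * X + C (M 0 0 * M 1 1 - M 0 1 * M 1 0) := by
  rw [Matrix.charpoly, Matrix.det_fin_two]
  rw [Matrix.charmatrix_apply_eq, Matrix.charmatrix_apply_eq,
    Matrix.charmatrix_apply_ne _ _ _ (by decide), Matrix.charmatrix_apply_ne _ _ _ (by decide)]
  simp only [C_add, C_mul, C_sub]
  ring

/-- Roots of a real quadratic have equal nonzero absolute value iff `d ≠ 0` and
(`t = 0` or `t² ≤ 4d`). -/
lemma quad_iff (t d : ℝ) :
    (∃ μ₁ μ₂ : ℂ, ((X:ℂ[X])^2 - C ((t:ℂ)) * X + C ((d:ℂ))) = (X - C μ₁) * (X - C μ₂) ∧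
      ‖μ₁‖ = ‖μ₂‖ ∧ μ₁ ≠ 0 ∧ μ₂ ≠ 0) ↔
    (d ≠ 0 ∧ (t = 0 ∨ t^2 ≤ 4*d)) := by
  constructor
  · rintro ⟨μ₁, μ₂, hpoly, habs, h1, h2⟩
    have h0 := congrArg (Polynomial.eval 0) hpoly
    have he1 := congrArg (Polynomial.eval 1) hpoly
    simp only [eval_add, eval_sub, eval_mul, eval_pow, eval_X, eval_C, eval_one] at h0 he1
    have hd : (d : ℂ) = μ₁ * μ₂ := by linear_combination h0
    have ht : (t : ℂ) = μ₁ + μ₂ := by linear_combination -he1 + h0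
    have hdne : d ≠ 0 := by
      intro h; rw [h] at hd
      exact (mul_ne_zero h1 h2) (by exact_mod_cast hd.symm)
    refine ⟨hdne, ?_⟩
    have hbi : μ₁.im + μ₂.im = 0 := by
      have := congrArg Complex.im ht; simpa using this.symm
    have hre : t = μ₁.re + μ₂.re := by
      have := congrArg Complex.re ht; simpa using this
    have him : μ₁.re * μ₂.im + μ₁.im * μ₂.re = 0 := by
      have := congrArg Complex.im hd; simpa [Complex.mul_im] using this.symm
    have hdr : d = μ₁.re * μ₂.re - μ₁.im * μ₂.im := by
      have := congrArg Complex.re hd; simpa [Complex.mul_re] using this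
    by_cases hb : μ₁.im = 0
    · -- both roots real
      have hb2 : μ₂.im = 0 := by linarith
      have hsq : μ₁.re * μ₁.re = μ₂.re * μ₂.re := by
        have hn : Complex.normSq μ₁ = Complex.normSq μ₂ := by
          rw [← Complex.sq_norm, ← Complex.sq_norm, habs]
        simpa [Complex.normSq_apply, hb, hb2] using hn
      rcases mul_self_eq_mul_self_iff.mp hsq with h | h
      · right
        have hd' : d = μ₁.re * μ₂.re := by rw [hdr, hb, hb2]; ring
        rw [hre, hd', h]
        nlinarith [sq_nonneg μ₂.re]
      · left; rw [hre, h]; ring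
    · -- conjugate pair
      right
      have hb2 : μ₂.im = -μ₁.im := by linarith
      have hra : μ₂.re = μ₁.re := by
        rw [hb2] at him
        have : μ₁.im * (μ₂.re - μ₁.re) = 0 := by linarith
        rcases mul_eq_zero.mp this with h | h
        · exact absurd h hb
        · linarith
      have h' : t = μ₁.re + μ₁.re := by rw [hre, hra]
      have h'' : d = μ₁.re * μ₁.re + μ₁.im * μ₁.im := by rw [hdr, hra, hb2]; ring
      rw [h', h'']
      nlinarith [mul_self_nonneg μ₁.im]
  · rintro ⟨hd, ht⟩
    have key : ∀ μ₁ μ₂ : ℂ, (t:ℂ) = μ₁ + μ₂ → (d:ℂ) = μ₁ * μ₂ →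
        ((X:ℂ[X])^2 - C ((t:ℂ)) * X + C ((d:ℂ))) = (X - C μ₁) * (X - C μ₂) := by
      intro μ₁ μ₂ h1 h2
      rw [h1, h2, C_add, C_mul]; ring
    rcases lt_or_gt_of_ne hd with hdneg | hdpos
    · -- d < 0, so t = 0 : roots ±√(-d)
      have ht0 : t = 0 := by
        rcases ht with h | h
        · exact h
        · nlinarith
      have hm : Real.sqrt (-d) * Real.sqrt (-d) = -d := Real.mul_self_sqrt (by linarith)
      have hs : 0 < Real.sqrt (-d) := Real.sqrt_pos.mpr (by linarith)
      refine ⟨Real.sqrt (-d), -Real.sqrt (-d), ?_, ?_, ?_, ?_⟩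
      · apply key
        · push_cast [ht0]; ring
        · have h2 : (Real.sqrt (-d) * -Real.sqrt (-d) : ℝ) = d := by nlinarith
          calc (d:ℂ) = ((Real.sqrt (-d) * -Real.sqrt (-d) : ℝ) : ℂ) := by rw [h2]
          _ = (Real.sqrt (-d) : ℂ) * -(Real.sqrt (-d) : ℂ) := by push_cast; ring
      · simp
      · exact Complex.ofReal_ne_zero.mpr hs.ne'
      · exact neg_ne_zero.mpr (Complex.ofReal_ne_zero.mpr hs.ne')
    · -- d > 0, so t² ≤ 4d : conjugate roots
      have ht4 : t ^ 2 ≤ 4 * d := by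
        rcases ht with h | h
        · nlinarith
        · exact h
      set b : ℝ := Real.sqrt (4 * d - t ^ 2) / 2 with hbdef
      have hbsq : b ^ 2 = (4 * d - t ^ 2) / 4 := by
        rw [hbdef, div_pow, Real.sq_sqrt (by linarith)]; ring
      refine ⟨⟨t/2, b⟩, ⟨t/2, -b⟩, ?_, ?_, ?_, ?_⟩
      · apply key
        · apply Complex.ext
          · simp
          · simp
        · apply Complex.ext
          · simp [Complex.mul_re]; nlinarith [hbsq]
          · simp [Complex.mul_im]; ring
      · simp [Complex.norm_def, Complex.normSq_apply]
      · intro h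
        have := congrArg Complex.normSq h
        simp [Complex.normSq_apply] at this
        nlinarith [hbsq]
      · intro h
        have := congrArg Complex.normSq h
        simp [Complex.normSq_apply] at this
        nlinarith [hbsq]

/-- Characteristic polynomial of `T_ψ` for the real state. -/
lemma Tmat_charpoly (p θ₁ θ₂ ε : ℝ) (hp0 : 0 ≤ p) (hp1 : p ≤ 1) :
    (Tmat (psiReal p θ₁ θ₂ ε)).charpoly =
      X^2 - C (((-(Real.sqrt (1-p) + ε * Real.sqrt p) * Real.sin (θ₂ - θ₁) : ℝ)) : ℂ) * X
        + C (((ε * Real.sqrt (p * (1-p)) : ℝ)) : ℂ) := by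
  have e00 : Tmat (psiReal p θ₁ θ₂ ε) 0 0 = ((Real.sqrt (1-p) * Real.cos θ₁ * (-Real.sin θ₂) +
      ε * Real.sqrt p * Real.sin θ₁ * Real.cos θ₂ : ℝ) : ℂ) := by
    simp only [Tmat, psiReal, Rrot, Matrix.cons_val', Matrix.cons_val_zero, Matrix.cons_val_one,
      Matrix.head_cons, Matrix.of_apply, Matrix.empty_val', Matrix.cons_val_fin_one,
      Matrix.head_fin_const, Complex.star_def, Complex.conj_ofReal]
  have e01 : Tmat (psiReal p θ₁ θ₂ ε) 0 1 = ((Real.sqrt (1-p) * Real.sin θ₁ * Real.sin θ₂ +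
      ε * Real.sqrt p * Real.cos θ₁ * Real.cos θ₂ : ℝ) : ℂ) := by
    simp only [Tmat, psiReal, Rrot, Matrix.cons_val', Matrix.cons_val_zero, Matrix.cons_val_one,
      Matrix.head_cons, Matrix.of_apply, Matrix.empty_val', Matrix.cons_val_fin_one,
      Matrix.head_fin_const, Complex.star_def, Complex.conj_ofReal]
    push_cast; ring
  have e10 : Tmat (psiReal p θ₁ θ₂ ε) 1 0 = -((Real.sqrt (1-p) * Real.cos θ₁ * Real.cos θ₂ +
      ε * Real.sqrt p * Real.sin θ₁ * Real.sin θ₂ : ℝ) : ℂ) := by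
    simp only [Tmat, psiReal, Rrot, Matrix.cons_val', Matrix.cons_val_zero, Matrix.cons_val_one,
      Matrix.head_cons, Matrix.of_apply, Matrix.empty_val', Matrix.cons_val_fin_one,
      Matrix.head_fin_const, Complex.star_def, Complex.conj_ofReal]
  have e11 : Tmat (psiReal p θ₁ θ₂ ε) 1 1 = -((Real.sqrt (1-p) * (-Real.sin θ₁) * Real.cos θ₂ +
      ε * Real.sqrt p * Real.cos θ₁ * Real.sin θ₂ : ℝ) : ℂ) := by
    simp only [Tmat, psiReal, Rrot, Matrix.cons_val', Matrix.cons_val_zero, Matrix.cons_val_one,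
      Matrix.head_cons, Matrix.of_apply, Matrix.empty_val', Matrix.cons_val_fin_one,
      Matrix.head_fin_const, Complex.star_def, Complex.conj_ofReal]
  rw [charpoly_fin_two', e00, e01, e10, e11]
  have hs1 := Real.sin_sq_add_cos_sq θ₁
  have hs2 := Real.sin_sq_add_cos_sq θ₂
  have hcs : Real.sqrt (1-p) * Real.sqrt p = Real.sqrt (p * (1-p)) := by
    rw [← Real.sqrt_mul (by linarith : (0:ℝ) ≤ 1 - p) p, mul_comm (1-p) p]
  have hA : ((Real.sqrt (1-p) * Real.cos θ₁ * (-Real.sin θ₂) +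
        ε * Real.sqrt p * Real.sin θ₁ * Real.cos θ₂ : ℝ) : ℂ) +
      -((Real.sqrt (1-p) * (-Real.sin θ₁) * Real.cos θ₂ +
        ε * Real.sqrt p * Real.cos θ₁ * Real.sin θ₂ : ℝ) : ℂ) =
      ((-(Real.sqrt (1-p) + ε * Real.sqrt p) * Real.sin (θ₂ - θ₁) : ℝ) : ℂ) := by
    have hr : (Real.sqrt (1-p) * Real.cos θ₁ * (-Real.sin θ₂) +
        ε * Real.sqrt p * Real.sin θ₁ * Real.cos θ₂) -
        (Real.sqrt (1-p) * (-Real.sin θ₁) * Real.cos θ₂ +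
        ε * Real.sqrt p * Real.cos θ₁ * Real.sin θ₂) =
        -(Real.sqrt (1-p) + ε * Real.sqrt p) * Real.sin (θ₂ - θ₁) := by
      rw [Real.sin_sub]; ring
    rw [← hr]; push_cast; ring
  have hB : ((Real.sqrt (1-p) * Real.cos θ₁ * (-Real.sin θ₂) +
        ε * Real.sqrt p * Real.sin θ₁ * Real.cos θ₂ : ℝ) : ℂ) *
      -((Real.sqrt (1-p) * (-Real.sin θ₁) * Real.cos θ₂ +
        ε * Real.sqrt p * Real.cos θ₁ * Real.sin θ₂ : ℝ) : ℂ) -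
      ((Real.sqrt (1-p) * Real.sin θ₁ * Real.sin θ₂ +
        ε * Real.sqrt p * Real.cos θ₁ * Real.cos θ₂ : ℝ) : ℂ) *
      -((Real.sqrt (1-p) * Real.cos θ₁ * Real.cos θ₂ +
        ε * Real.sqrt p * Real.sin θ₁ * Real.sin θ₂ : ℝ) : ℂ) =
      ((ε * Real.sqrt (p * (1-p)) : ℝ) : ℂ) := by
    have hr : (Real.sqrt (1-p) * Real.cos θ₁ * (-Real.sin θ₂) +
        ε * Real.sqrt p * Real.sin θ₁ * Real.cos θ₂) *
        -(Real.sqrt (1-p) * (-Real.sin θ₁) * Real.cos θ₂ +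
        ε * Real.sqrt p * Real.cos θ₁ * Real.sin θ₂) -
        (Real.sqrt (1-p) * Real.sin θ₁ * Real.sin θ₂ +
        ε * Real.sqrt p * Real.cos θ₁ * Real.cos θ₂) *
        -(Real.sqrt (1-p) * Real.cos θ₁ * Real.cos θ₂ +
        ε * Real.sqrt p * Real.sin θ₁ * Real.sin θ₂) =
        ε * Real.sqrt (p * (1-p)) := by
      linear_combination (ε * Real.sqrt (1-p) * Real.sqrt p *
          (Real.sin θ₂^2 + Real.cos θ₂^2)) * hs1 +
        (ε * Real.sqrt (1-p) * Real.sqrt p) * hs2 + ε * hcs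
    rw [← hr]; push_cast; ring
  rw [hA, hB]

/-- **Phase diagram for real forbidden states** (as stated in the introduction of the
paper). The eigenvalues of `T_{ψ₊}` have equal non-zero magnitude iff `p > 0` and
`sin²(θ₂−θ₁) ≤ 4/(2+(p(1−p))^{−1/2})`; the eigenvalues of `T_{ψ₋}` have equal non-zero
magnitude iff `p = 1/2`, or `sin(θ₂−θ₁) = 0` and `0 < p < 1`. -/
theorem real_state_phase_diagram (p θ₁ θ₂ : ℝ)
    (hp0 : 0 ≤ p) (hp : p ≤ 1 / 2)
    (hθ₁ : θ₁ ∈ Set.Icc 0 Real.pi) (hθ₂ : θ₂ ∈ Set.Icc 0 Real.pi) :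
    (EqualNonzeroAbsEigs (Tmat (psiReal p θ₁ θ₂ 1)) ↔
      (0 < p ∧ Real.sin (θ₂ - θ₁) ^ 2 ≤ 4 / (2 + (Real.sqrt (p * (1 - p)))⁻¹))) ∧
    (EqualNonzeroAbsEigs (Tmat (psiReal p θ₁ θ₂ (-1))) ↔
      (p = 1 / 2 ∨ (Real.sin (θ₂ - θ₁) = 0 ∧ 0 < p ∧ p < 1))) := by
  have hp1 : p ≤ 1 := by linarith
  have h1p : (0:ℝ) < 1 - p := by linarith
  set Δ := Real.sin (θ₂ - θ₁) with hΔ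
  set u := Real.sqrt (1 - p) with hu
  set v := Real.sqrt p with hv
  set w := Real.sqrt (p * (1 - p)) with hw
  have hu2 : u ^ 2 = 1 - p := Real.sq_sqrt (by linarith)
  have hv2 : v ^ 2 = p := Real.sq_sqrt hp0
  have hw2 : w ^ 2 = p * (1 - p) := Real.sq_sqrt (by positivity)
  have huv : u * v = w := by
    rw [hu, hv, hw, ← Real.sqrt_mul (by linarith : (0:ℝ) ≤ 1 - p) p, mul_comm (1-p) p]
  have hupos : 0 < u := Real.sqrt_pos.mpr h1p
  have hvnn : 0 ≤ v := Real.sqrt_nonneg p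
  have hwnn : 0 ≤ w := Real.sqrt_nonneg _
  -- positivity of w iff p > 0
  have hwp : 0 < w ↔ 0 < p := by
    constructor
    · intro h
      by_contra hc
      push_neg at hc
      have : p = 0 := le_antisymm hc hp0
      rw [hw, this] at h
      simp at h
    · intro h
      rw [hw]
      exact Real.sqrt_pos.mpr (by positivity)
  constructor
  · -- ε = 1
    rw [EqualNonzeroAbsEigs, Tmat_charpoly p θ₁ θ₂ 1 hp0 hp1, quad_iff, ← hu, ← hv, ← hw, ← hΔ]
    constructor
    · rintro ⟨hdne, hor⟩
      have hwne : w ≠ 0 := fun h => hdne (by rw [h]; ring)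
      have hwpos : 0 < w := lt_of_le_of_ne hwnn (Ne.symm hwne)
      have hppos : 0 < p := hwp.mp hwpos
      refine ⟨hppos, ?_⟩
      have hbound : 4 / (2 + w⁻¹) = 4 * w / (1 + 2 * w) := by
        rw [div_eq_div_iff (by positivity) (by positivity)]
        field_simp
        ring
      rw [hbound, le_div_iff₀ (by positivity)]
      rcases hor with h | h
      · have hΔ0 : Δ = 0 := by
          have hsum : 0 < u + 1 * v := by linarith
          rcases mul_eq_zero.mp h with h' | h'
          · exact absurd (neg_eq_zero.mp h') hsum.ne'
          · exact h'
        rw [hΔ0]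
        nlinarith
      · have hexp : (-(u + 1 * v) * Δ) ^ 2 = (1 + 2 * w) * Δ ^ 2 := by
          linear_combination Δ^2 * hu2 + Δ^2 * hv2 + 2 * Δ^2 * huv
        nlinarith [h, hexp]
    · rintro ⟨hppos, hle⟩
      have hwpos : 0 < w := hwp.mpr hppos
      refine ⟨by intro hc; rw [one_mul] at hc; exact hwpos.ne' hc, Or.inr ?_⟩
      have hbound : 4 / (2 + w⁻¹) = 4 * w / (1 + 2 * w) := by
        rw [div_eq_div_iff (by positivity) (by positivity)]
        field_simp
        ring
      rw [hbound, le_div_iff₀ (by positivity)] at hle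
      have hexp : (-(u + 1 * v) * Δ) ^ 2 = (1 + 2 * w) * Δ ^ 2 := by
        linear_combination Δ^2 * hu2 + Δ^2 * hv2 + 2 * Δ^2 * huv
      nlinarith [hle, hexp]
  · -- ε = -1
    rw [EqualNonzeroAbsEigs, Tmat_charpoly p θ₁ θ₂ (-1) hp0 hp1, quad_iff, ← hu, ← hv, ← hw, ← hΔ]
    constructor
    · rintro ⟨hdne, hor⟩
      have hwne : w ≠ 0 := fun h => hdne (by rw [h]; ring)
      have hwpos : 0 < w := lt_of_le_of_ne hwnn (Ne.symm hwne)
      have hppos : 0 < p := hwp.mp hwpos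
      have ht0 : -(u + (-1) * v) * Δ = 0 := by
        rcases hor with h | h
        · exact h
        · nlinarith [sq_nonneg (-(u + (-1) * v) * Δ)]
      rcases mul_eq_zero.mp ht0 with h | h
      · -- u = v, so p = 1/2
        have huveq : u = v := by
          have : u - v = 0 := by linarith [neg_eq_zero.mp h]
          linarith
        left
        have : u ^ 2 = v ^ 2 := by rw [huveq]
        rw [hu2, hv2] at this
        linarith
      · right
        exact ⟨h, hppos, by linarith⟩
    · intro h
      have hppos : 0 < p := by
        rcases h with h | ⟨_, h, _⟩
        · rw [h]; norm_num
        · exact h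
      have hwpos : 0 < w := hwp.mpr hppos
      refine ⟨by intro hc; rw [neg_one_mul, neg_eq_zero] at hc; exact hwpos.ne' hc, Or.inl ?_⟩
      rcases h with h | ⟨hΔ0, _, _⟩
      · have huveq : u = v := by
          rw [hu, hv, show 1 - p = p by rw [h]; norm_num]
        rw [huveq]; ring
      · rw [hΔ0]; ring
end
end
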